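/- arXiv:2006.16629 — 4 statements merged into one kernel-verified Lean document; each statement's English description precedes it below -/
import Mathlib

section
/- Let A > 0, J = [A, A+1], and let φ : J → ℝ be a C^∞ function. Let d ≥ 1 and k ≥ 0 be integers. Suppose that the d-th derivative φ^{(d)} has at most k zeros in J and that M_d φ(α) ≥ λ > 0 for all α ∈ J, where M_d φ(α) := max_{1 ≤ i ≤ d} |φ^{(i)}(α)|. If d = 1, suppose in addition that φ' is monotone on J. Then there exists a constant C_{d,k} > 0 depending only on d and k such that |∫_J e(φ(α)) dα| ≤ C_{d,k} λ^{−1/d}. -/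
open MeasureTheory Filter Finset
open Set intervalIntegral

noncomputable def e (t : ℝ) : ℂ := Complex.exp (2 * Real.pi * Complex.I * t)

lemma e_norm (t : ℝ) : ‖e t‖ = 1 := by
  rw [e, Complex.norm_exp]
  have : (2 * Real.pi * Complex.I * t).re = 0 := by simp
  rw [this, Real.exp_zero]

lemma e_continuous : Continuous e := by
  unfold e; fun_prop

lemma hasDerivAt_e_comp (φ : ℝ → ℝ) (ψ : ℝ) (x : ℝ) (h : HasDerivAt φ ψ x) :
    HasDerivAt (fun y => e (φ y)) (2 * Real.pi * Complex.I * ψ * e (φ x)) x := by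
  have h1 : HasDerivAt (fun y : ℝ => (2 * Real.pi * Complex.I * (φ y : ℂ)))
      (2 * Real.pi * Complex.I * ψ) x := (h.ofReal_comp).const_mul _
  have := h1.cexp
  simpa [e, mul_comm] using this

lemma mvdc_le_closure {g : ℝ → ℝ} {a b m : ℝ} (hab : a < b) (hg : ContinuousOn g (Set.Icc a b))
    (h : ∀ x ∈ Set.Ioo a b, m ≤ g x) : ∀ x ∈ Set.Icc a b, m ≤ g x := by
  intro x hx
  have hne : (nhdsWithin x (Set.Ioo a b)).NeBot := by
    rw [← mem_closure_iff_nhdsWithin_neBot, closure_Ioo hab.ne]; exact hx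
  exact ge_of_tendsto ((hg x hx).mono Set.Ioo_subset_Icc_self)
    (eventually_nhdsWithin_of_forall h)

lemma lemA {a b : ℝ} (hab : a ≤ b) (φ ψ χ : ℝ → ℝ) (lam : ℝ) (hlam : 0 < lam)
    (hφc : ContinuousOn φ (Set.Icc a b)) (hψc : ContinuousOn ψ (Set.Icc a b))
    (hχc : ContinuousOn χ (Set.Icc a b))
    (hφ' : ∀ x ∈ Set.Ioo a b, HasDerivAt φ (ψ x) x)
    (hψ' : ∀ x ∈ Set.Ioo a b, HasDerivAt ψ (χ x) x)
    (hsgn : (∀ x ∈ Set.Ioo a b, 0 ≤ χ x) ∨ (∀ x ∈ Set.Ioo a b, χ x ≤ 0))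
    (hlb : ∀ x ∈ Set.Icc a b, lam ≤ |ψ x|) :
    ‖∫ x in a..b, e (φ x)‖ ≤ 1 / lam := by
  rcases eq_or_lt_of_le hab with rfl | hab'
  · simp [one_div, inv_nonneg, hlam.le]
  have hπ : (0:ℝ) < Real.pi := Real.pi_pos
  set c : ℂ := 2 * Real.pi * Complex.I with hc
  have hcne : c ≠ 0 := by
    simp [hc, Complex.ext_iff, Real.pi_ne_zero]
  have hcabs : ‖c‖ = 2 * Real.pi := by
    simp [hc, hπ.le]
  have hψne : ∀ x ∈ Set.Icc a b, ψ x ≠ 0 := by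
    intro x hx h0
    have := hlb x hx; rw [h0] at this; simp at this; linarith
  set h : ℝ → ℂ := fun x => (c * (ψ x : ℂ))⁻¹ with hh
  set hd : ℝ → ℂ := fun x => -(χ x : ℂ) / (c * (ψ x : ℂ) ^ 2) with hhd
  set r : ℝ → ℝ := fun x => χ x / (2 * Real.pi * (ψ x) ^ 2) with hr
  set F : ℝ → ℂ := fun x => e (φ x) * h x with hF
  have hec : ContinuousOn (fun x => e (φ x)) (Set.Icc a b) := e_continuous.comp_continuousOn hφc
  have hψcC : ContinuousOn (fun x => (ψ x : ℂ)) (Set.Icc a b) :=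
    Complex.continuous_ofReal.comp_continuousOn hψc
  have hψneC : ∀ x ∈ Set.Icc a b, c * (ψ x : ℂ) ≠ 0 := fun x hx =>
    mul_ne_zero hcne (by exact_mod_cast hψne x hx)
  have hhc : ContinuousOn h (Set.Icc a b) :=
    (continuousOn_const.mul hψcC).inv₀ hψneC
  have hFc : ContinuousOn F (Set.Icc a b) := hec.mul hhc
  have hhdc : ContinuousOn hd (Set.Icc a b) := by
    apply ContinuousOn.div
    · exact (Complex.continuous_ofReal.comp_continuousOn hχc).neg
    · exact continuousOn_const.mul (hψcC.pow 2)
    · intro x hx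
      exact mul_ne_zero hcne (pow_ne_zero 2 (by exact_mod_cast hψne x hx))
  -- derivative of F on Ioo
  have hdF : ∀ x ∈ Set.Ioo a b, HasDerivAt F (e (φ x) + e (φ x) * hd x) x := by
    intro x hx
    have hxI : x ∈ Set.Icc a b := Set.Ioo_subset_Icc_self hx
    have hde := hasDerivAt_e_comp φ (ψ x) x (hφ' x hx)
    have hdenom : HasDerivAt (fun y => c * (ψ y : ℂ)) (c * (χ x : ℂ)) x :=
      ((hψ' x hx).ofReal_comp).const_mul c
    have hdh : HasDerivAt (fun y => (c * (ψ y : ℂ))⁻¹) (-(c * (χ x : ℂ)) / (c * (ψ x : ℂ)) ^ 2) x := by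
      have := (hasDerivAt_inv (hψneC x hxI)).comp x hdenom
      simp only [Function.comp_def] at this
      refine this.congr_deriv ?_
      field_simp
    have hmul := hde.mul hdh
    simp only [hF, hh, hhd]
    refine hmul.congr_deriv ?_
    have hψx : (ψ x : ℂ) ≠ 0 := by exact_mod_cast hψne x hxI
    rw [← hc]
    field_simp [hh, hhd]
  -- FTC to express the integral
  have hint1 : IntervalIntegrable (fun x => e (φ x)) volume a b := by
    apply ContinuousOn.intervalIntegrable
    rwa [Set.uIcc_of_le hab]
  have hint2 : IntervalIntegrable (fun x => e (φ x) * hd x) volume a b := by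
    apply ContinuousOn.intervalIntegrable
    rw [Set.uIcc_of_le hab]; exact hec.mul hhdc
  have hFTC : ∫ x in a..b, (e (φ x) + e (φ x) * hd x) = F b - F a := by
    apply intervalIntegral.integral_eq_sub_of_hasDeriv_right_of_le hab hFc
    · exact fun x hx => (hdF x hx).hasDerivWithinAt
    · exact hint1.add hint2
  have hsplit : ∫ x in a..b, e (φ x) = F b - F a - ∫ x in a..b, e (φ x) * hd x := by
    rw [← hFTC, intervalIntegral.integral_add hint1 hint2]; ring
  -- bounds on boundary terms
  have hFbound : ∀ x ∈ Set.Icc a b, ‖F x‖ ≤ 1 / (2 * Real.pi * lam) := by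
    intro x hx
    have : ‖F x‖ = ‖h x‖ := by simp only [hF]; rw [norm_mul, e_norm, one_mul]
    rw [this]; simp only [hh]
    simp only [norm_inv, norm_mul, hcabs]
    rw [Complex.norm_real]
    rw [one_div]
    apply inv_anti₀ (by positivity)
    have := hlb x hx
    calc 2 * Real.pi * lam ≤ 2 * Real.pi * |ψ x| := by nlinarith
    _ = 2 * Real.pi * ‖ψ x‖ := by rw [Real.norm_eq_abs]
  -- bound on the remaining integral
  have hnorm_eq : ∀ x ∈ Set.Icc a b, ‖e (φ x) * hd x‖ = |r x| := by
    intro x hx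
    rw [norm_mul, e_norm, one_mul, hhd, hr]
    simp only [norm_div, norm_neg, norm_mul, hcabs, Complex.norm_real, norm_pow]
    rw [abs_div, Real.norm_eq_abs, Real.norm_eq_abs]
    congr 1
    have hsq : (0:ℝ) < ψ x ^ 2 :=
      lt_of_le_of_ne (sq_nonneg _) (Ne.symm (pow_ne_zero 2 (hψne x hx)))
    rw [abs_of_pos (mul_pos (by positivity) hsq : (0:ℝ) < 2 * Real.pi * ψ x ^ 2)]
    rw [← abs_pow, abs_of_nonneg (sq_nonneg (ψ x))]
  -- FTC for r
  have hrint : IntervalIntegrable r volume a b := by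
    apply ContinuousOn.intervalIntegrable
    rw [Set.uIcc_of_le hab]
    exact hχc.div (continuousOn_const.mul (hψc.pow 2))
      (fun x hx => by
        have hsq : (0:ℝ) < ψ x ^ 2 :=
          lt_of_le_of_ne (sq_nonneg _) (Ne.symm (pow_ne_zero 2 (hψne x hx)))
        exact (mul_pos (by positivity : (0:ℝ) < 2*Real.pi) hsq).ne')
  set G : ℝ → ℝ := fun y => -(2 * Real.pi * ψ y)⁻¹ with hG
  have hψne2 : ∀ x ∈ Set.Icc a b, 2 * Real.pi * ψ x ≠ 0 := fun x hx =>
    mul_ne_zero (by positivity) (hψne x hx)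
  have hGc : ContinuousOn G (Set.Icc a b) :=
    ((continuousOn_const.mul hψc).inv₀ hψne2).neg
  have hGder : ∀ x ∈ Set.Ioo a b, HasDerivAt G (r x) x := by
    intro x hx
    have hxI : x ∈ Set.Icc a b := Set.Ioo_subset_Icc_self hx
    have h1 : HasDerivAt (fun y => 2 * Real.pi * ψ y) (2 * Real.pi * χ x) x :=
      (hψ' x hx).const_mul _
    have h2 := ((hasDerivAt_inv (hψne2 x hxI)).comp x h1).neg
    simp only [Function.comp_def] at h2
    refine h2.congr_deriv ?_
    have := hψne x hxI
    rw [hr]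
    field_simp
  have hrFTC : ∫ x in a..b, r x = G b - G a :=
    intervalIntegral.integral_eq_sub_of_hasDeriv_right_of_le hab hGc
      (fun x hx => (hGder x hx).hasDerivWithinAt) hrint
  have hGbound : ∀ x ∈ Set.Icc a b, |G x| ≤ 1 / (2 * Real.pi * lam) := by
    intro x hx
    rw [hG]
    simp only [abs_neg, abs_inv]
    rw [one_div]
    apply inv_anti₀ (by positivity)
    rw [abs_mul, abs_of_nonneg (by positivity : (0:ℝ) ≤ 2 * Real.pi)]
    have := hlb x hx
    nlinarith [Real.pi_pos]
  have habs : |∫ x in a..b, r x| ≤ 1 / (Real.pi * lam) := by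
    rw [hrFTC]
    have h1 := hGbound a (Set.left_mem_Icc.2 hab)
    have h2 := hGbound b (Set.right_mem_Icc.2 hab)
    have h3 : |G b - G a| ≤ |G b| + |G a| := abs_sub _ _
    have : 1 / (2*Real.pi*lam) + 1/(2*Real.pi*lam) = 1/(Real.pi*lam) := by
      rw [← add_div]
      rw [div_eq_div_iff (by positivity) (by positivity)]
      ring
    linarith
  have hsign : ∫ x in a..b, |r x| = |∫ x in a..b, r x| := by
    rcases hsgn with hs | hs
    · have hs' : ∀ x ∈ Set.Icc a b, 0 ≤ χ x := mvdc_le_closure hab' hχc hs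
      have hre : ∀ x ∈ Set.Icc a b, 0 ≤ r x := by
        intro x hx
        exact div_nonneg (hs' x hx) (by positivity)
      rw [intervalIntegral.integral_congr (g := r) (fun x hx => by
        rw [Set.uIcc_of_le hab] at hx; exact abs_of_nonneg (hre x hx))]
      rw [abs_of_nonneg (intervalIntegral.integral_nonneg hab hre)]
    · have hs' : ∀ x ∈ Set.Icc a b, 0 ≤ -χ x := mvdc_le_closure hab' hχc.neg
        (fun x hx => neg_nonneg.2 (hs x hx))
      have hre : ∀ x ∈ Set.Icc a b, 0 ≤ -r x := by
        intro x hx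
        rw [hr]
        simp only [← neg_div]
        exact div_nonneg (hs' x hx) (by positivity)
      rw [intervalIntegral.integral_congr (g := fun x => -r x) (fun x hx => by
        rw [Set.uIcc_of_le hab] at hx
        rw [abs_of_nonpos (by linarith [hre x hx])]
        )]
      rw [intervalIntegral.integral_neg]
      rw [abs_of_nonpos (by
        have h9 := intervalIntegral.integral_nonneg (f := fun x => -r x) (μ := volume) hab hre
        rw [intervalIntegral.integral_neg] at h9
        linarith)]
  have hnormint : ‖∫ x in a..b, e (φ x) * hd x‖ ≤ 1 / (Real.pi * lam) := by
    have h1 := intervalIntegral.norm_integral_le_integral_norm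
      (f := fun x => e (φ x) * hd x) (a := a) (b := b) (μ := volume) hab
    have h2 : ∫ x in a..b, ‖e (φ x) * hd x‖ = ∫ x in a..b, |r x| :=
      intervalIntegral.integral_congr (fun x hx => by
        rw [Set.uIcc_of_le hab] at hx; exact hnorm_eq x hx)
    rw [h2, hsign] at h1
    exact h1.trans habs
  rw [hsplit]
  have hFa := hFbound a (Set.left_mem_Icc.2 hab)
  have hFb := hFbound b (Set.right_mem_Icc.2 hab)
  have step : ‖F b - F a - ∫ x in a..b, e (φ x) * hd x‖ ≤
      ‖F b‖ + ‖F a‖ + ‖∫ x in a..b, e (φ x) * hd x‖ := by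
    calc ‖F b - F a - ∫ x in a..b, e (φ x) * hd x‖
        ≤ ‖F b - F a‖ + ‖∫ x in a..b, e (φ x) * hd x‖ := norm_sub_le _ _
      _ ≤ ‖F b‖ + ‖F a‖ + ‖∫ x in a..b, e (φ x) * hd x‖ := by
          have := norm_sub_le (F b) (F a); linarith
  have hπ2 : (2:ℝ) ≤ Real.pi := Real.two_le_pi
  have hfin : 1/(2*Real.pi*lam) + 1/(2*Real.pi*lam) + 1/(Real.pi*lam) ≤ 1/lam := by
    rw [← add_div]
    have e1 : (1:ℝ)+1 = 2 := by norm_num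
    rw [e1]
    have e2 : (2:ℝ)/(2*Real.pi*lam) = 1/(Real.pi*lam) := by
      rw [div_eq_div_iff (by positivity) (by positivity)]; ring
    rw [e2]
    rw [← add_div]
    have e3 : (1:ℝ)+1 = 2 := by norm_num
    rw [e3, div_le_div_iff₀ (by positivity) hlam]
    nlinarith
  linarith [step, hnormint, hFa, hFb]

lemma mvdc_sign {g : ℝ → ℝ} {a b m : ℝ} (hab : a ≤ b) (hm : 0 < m)
    (hc : ContinuousOn g (Set.Icc a b)) (h : ∀ x ∈ Set.Icc a b, m ≤ |g x|) :
    (∀ x ∈ Set.Icc a b, m ≤ g x) ∨ (∀ x ∈ Set.Icc a b, g x ≤ -m) := by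
  have hne : ∀ x ∈ Set.Icc a b, g x ≠ 0 := fun x hx h0 => by
    have := h x hx; rw [h0] at this; simp at this; linarith
  have hmem : a ∈ Set.Icc a b := Set.left_mem_Icc.2 hab
  rcases lt_or_gt_of_ne (hne a hmem) with hneg | hpos
  · right
    intro x hx
    by_contra hlt
    push_neg at hlt
    have hgx : m ≤ g x := by
      rcases abs_cases (g x) with ⟨h1, _⟩ | ⟨h1, _⟩
      · have := h x hx; linarith
      · have := h x hx; linarith
    have h0 : (0:ℝ) ∈ Set.Icc (g a) (g x) := ⟨hneg.le, by linarith⟩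
    obtain ⟨c, hc1, hc2⟩ := intermediate_value_Icc hx.1
      (hc.mono (Set.Icc_subset_Icc le_rfl hx.2)) h0
    exact hne c (Set.Icc_subset_Icc le_rfl hx.2 hc1) hc2
  · left
    intro x hx
    by_contra hlt
    push_neg at hlt
    have hgx : g x ≤ -m := by
      rcases abs_cases (g x) with ⟨h1, _⟩ | ⟨h1, _⟩
      · have := h x hx; linarith
      · have := h x hx; linarith
    have h0 : (0:ℝ) ∈ Set.Icc (g x) (g a) := ⟨by linarith, hpos.le⟩
    obtain ⟨c, hc1, hc2⟩ := intermediate_value_Icc' hx.1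
      (hc.mono (Set.Icc_subset_Icc le_rfl hx.2)) h0
    exact hne c (Set.Icc_subset_Icc le_rfl hx.2 hc1) hc2

lemma triv_bound (a b : ℝ) (hab : a ≤ b) (φ : ℝ → ℝ) :
    ‖∫ x in a..b, e (φ x)‖ ≤ b - a := by
  have := intervalIntegral.norm_integral_le_of_norm_le_const (a := a) (b := b) (C := 1)
    (f := fun x => e (φ x)) (fun x _ => by rw [e_norm])
  rwa [one_mul, abs_of_nonneg (by linarith)] at this

lemma e_intable {a b : ℝ} {φ : ℝ → ℝ} (h : ContinuousOn φ (Set.uIcc a b)) :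
    IntervalIntegrable (fun x => e (φ x)) volume a b :=
  (e_continuous.comp_continuousOn h).intervalIntegrable

lemma e_neg (t : ℝ) : e (-t) = starRingEnd ℂ (e t) := by
  rw [e, e, ← Complex.exp_conj]
  congr 1
  simp [Complex.ext_iff]

lemma mvdc_int_conj {f : ℝ → ℂ} {a b : ℝ} :
    ∫ x in a..b, (starRingEnd ℂ) (f x) = (starRingEnd ℂ) (∫ x in a..b, f x) := by
  rw [intervalIntegral, intervalIntegral, integral_conj, integral_conj, map_sub]

lemma lemB : ∀ d : ℕ, 1 ≤ d → ∀ (a b : ℝ), a ≤ b → b - a ≤ 1 →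
    ∀ (f : ℕ → ℝ → ℝ),
    (∀ i, i ≤ d + 1 → ContinuousOn (f i) (Set.Icc a b)) →
    (∀ i, i ≤ d → ∀ x ∈ Set.Ioo a b, HasDerivAt (f i) (f (i+1) x) x) →
    ∀ lam : ℝ, 0 < lam → (∀ x ∈ Set.Icc a b, lam ≤ |f d x|) →
    (d = 1 → (∀ x ∈ Set.Ioo a b, 0 ≤ f 2 x) ∨ (∀ x ∈ Set.Ioo a b, f 2 x ≤ 0)) →
    ‖∫ x in a..b, e (f 0 x)‖ ≤ 4 ^ d * lam ^ (-(1:ℝ)/d) := by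
  intro d hd
  induction d, hd using Nat.le_induction with
  | base =>
    intro a b hab hab1 f hcont hder lam hlam hlb hsgn
    have h1 := lemA hab (f 0) (f 1) (f 2) lam hlam
      (hcont 0 (by norm_num)) (hcont 1 (by norm_num)) (hcont 2 (by norm_num))
      (hder 0 (by norm_num)) (hder 1 (by norm_num)) (hsgn rfl) hlb
    have h2 : lam ^ (-(1:ℝ)/((1:ℕ):ℝ)) = 1 / lam := by
      rw [Nat.cast_one, neg_div, div_one, Real.rpow_neg_one, one_div]
    rw [h2]
    calc ‖∫ x in a..b, e (f 0 x)‖ ≤ 1/lam := h1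
      _ ≤ 4^1 * (1/lam) := by
          have : 0 < 1/lam := by positivity
          rw [pow_one]; linarith
  | succ d hd IH =>
    intro a b hab hab1 f hcont hder lam hlam hlb hsgn
    clear hsgn
    have hcast : ((d+1 : ℕ):ℝ) = (d:ℝ)+1 := by push_cast; ring
    have core : ∀ g : ℕ → ℝ → ℝ,
        (∀ i, i ≤ d + 2 → ContinuousOn (g i) (Set.Icc a b)) →
        (∀ i, i ≤ d + 1 → ∀ x ∈ Set.Ioo a b, HasDerivAt (g i) (g (i+1) x) x) →
        (∀ x ∈ Set.Icc a b, lam ≤ g (d+1) x) →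
        ‖∫ x in a..b, e (g 0 x)‖ ≤ 4 ^ (d+1) * lam ^ (-(1:ℝ)/((d:ℝ)+1)) := by
      intro g hgc hgd hpos
      set δ : ℝ := lam ^ (-(1:ℝ)/((d:ℝ)+1)) with hδ
      have hδpos : 0 < δ := Real.rpow_pos_of_pos hlam _
      have hld : 0 < lam * δ := by positivity
      have hd0 : (d:ℝ) ≠ 0 := Nat.cast_ne_zero.2 (by omega)
      have hd1 : (d:ℝ) + 1 ≠ 0 := by positivity
      have hkey : (lam * δ) ^ (-(1:ℝ)/(d:ℝ)) = δ := by
        rw [hδ]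
        have e1 : lam * lam ^ (-(1:ℝ)/((d:ℝ)+1)) = lam ^ ((d:ℝ)/((d:ℝ)+1)) := by
          have e0 : (d:ℝ)/((d:ℝ)+1) = 1 + (-(1:ℝ)/((d:ℝ)+1)) := by field_simp; ring
          rw [e0, Real.rpow_add hlam, Real.rpow_one]
        rw [e1, ← Real.rpow_mul hlam.le]
        congr 1
        field_simp
      have h4pos : (0:ℝ) < 4 ^ d := by positivity
      have h4one : (1:ℝ) ≤ 4 ^ d := one_le_pow₀ (by norm_num)
      -- monotonicity of g d minus lam * x
      have hslope : ∀ x ∈ Set.Icc a b, ∀ y ∈ Set.Icc a b, x ≤ y →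
          lam * (y - x) ≤ g d y - g d x := by
        intro x hx y hy hxy
        have hmono : MonotoneOn (fun z => g d z - lam * z) (Set.Icc a b) := by
          apply monotoneOn_of_deriv_nonneg (convex_Icc a b)
          · exact (hgc d (by omega)).sub (continuousOn_const.mul continuousOn_id)
          · rw [interior_Icc]
            intro z hz
            exact ((hgd d (by omega) z hz).sub
              (by simpa using (hasDerivAt_id z).const_mul lam)).differentiableAt.differentiableWithinAt
          · rw [interior_Icc]
            intro z hz
            have hD : HasDerivAt (fun w => g d w - lam * w) (g (d+1) z - lam) z :=
              (hgd d (by omega) z hz).sub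
                (by simpa using (hasDerivAt_id z).const_mul lam)
            rw [hD.deriv]
            have := hpos z (Set.Ioo_subset_Icc_self hz)
            linarith
        have := hmono hx hy hxy
        simp only at this
        linarith
      set T : Set ℝ := {x | x ∈ Set.Icc a b ∧ |g d x| < lam * δ} with hT
      have hTsub : T ⊆ Set.Icc a b := fun x hx => hx.1
      have hbdda : BddAbove T := BddAbove.mono hTsub bddAbove_Icc
      have hbddb : BddBelow T := BddBelow.mono hTsub bddBelow_Icc
      have hint : ∀ p q : ℝ, a ≤ p → p ≤ q → q ≤ b →
          IntervalIntegrable (fun x => e (g 0 x)) volume p q := fun p q h1 h2 h3 =>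
        e_intable ((hgc 0 (by omega)).mono
          (by rw [Set.uIcc_of_le h2]; exact Set.Icc_subset_Icc h1 h3))
      -- bound on outer pieces
      have houter : ∀ p q : ℝ, a ≤ p → p ≤ q → q ≤ b →
          (∀ x ∈ Set.Ioo p q, lam * δ ≤ |g d x|) →
          ‖∫ x in p..q, e (g 0 x)‖ ≤ 4^d * δ := by
        intro p q h1 h2 h3 hlow
        rcases eq_or_lt_of_le h2 with rfl | h2'
        · simp only [intervalIntegral.integral_same, norm_zero]
          positivity
        · have hlow' : ∀ x ∈ Set.Icc p q, lam*δ ≤ |g d x| :=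
            mvdc_le_closure h2' ((hgc d (by omega)).mono (Set.Icc_subset_Icc h1 h3)).abs hlow
          have hsub : Set.Icc p q ⊆ Set.Icc a b := Set.Icc_subset_Icc h1 h3
          have hsub' : Set.Ioo p q ⊆ Set.Ioo a b := Set.Ioo_subset_Ioo h1 h3
          have hIH := IH p q h2 (by linarith) g
            (fun i hi => (hgc i (by omega)).mono hsub)
            (fun i hi x hx => hgd i (by omega) x (hsub' hx))
            (lam*δ) hld hlow'
            (by
              intro hdeq
              left
              intro x hx
              have h9 := hpos x (hsub (Set.Ioo_subset_Icc_self hx))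
              rw [hdeq] at h9
              norm_num at h9
              linarith)
          rw [hkey] at hIH
          exact hIH
      by_cases hTne : T.Nonempty
      · set u := sInf T with hu
        set v := sSup T with hv
        have hau : a ≤ u := le_csInf hTne (fun x hx => hx.1.1)
        have hvb : v ≤ b := csSup_le hTne (fun x hx => hx.1.2)
        have huv : u ≤ v := csInf_le_csSup hTne hbddb hbdda
        have hgap : ∀ x ∈ T, ∀ y ∈ T, y - x ≤ 2*δ := by
          intro x hx y hy
          rcases le_total x y with hxy | hxy
          · have hs := hslope x hx.1 y hy.1 hxy
            have h1 := hx.2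
            have h2 := hy.2
            have h3 : g d y - g d x < 2 * (lam * δ) := by
              have := abs_lt.1 h1
              have := abs_lt.1 h2
              linarith [(abs_lt.1 h1).1, (abs_lt.1 h1).2, (abs_lt.1 h2).1, (abs_lt.1 h2).2]
            nlinarith
          · nlinarith
        have hvu : v - u ≤ 2*δ := by
          have h1 : v ≤ 2*δ + u := csSup_le hTne (fun y hy => by
            have h2 : y - 2*δ ≤ u := le_csInf hTne (fun x hx => by
              have := hgap x hx y hy; linarith)
            linarith)
          linarith
        have hbound1 : ∀ x ∈ Set.Ioo a u, lam*δ ≤ |g d x| := by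
          intro x hx
          have hxI : x ∈ Set.Icc a b := ⟨hx.1.le, le_trans hx.2.le (huv.trans hvb)⟩
          by_contra hlt
          push_neg at hlt
          have hxT : x ∈ T := ⟨hxI, hlt⟩
          exact absurd (csInf_le hbddb hxT) (not_le.2 hx.2)
        have hbound2 : ∀ x ∈ Set.Ioo v b, lam*δ ≤ |g d x| := by
          intro x hx
          have hxI : x ∈ Set.Icc a b := ⟨le_trans (hau.trans huv) hx.1.le, hx.2.le⟩
          by_contra hlt
          push_neg at hlt
          have hxT : x ∈ T := ⟨hxI, hlt⟩
          exact absurd (le_csSup hbdda hxT) (not_le.2 hx.1)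
        have o1 := houter a u le_rfl hau (huv.trans hvb) hbound1
        have o2 := houter v b (hau.trans huv) hvb le_rfl hbound2
        have mid : ‖∫ x in u..v, e (g 0 x)‖ ≤ 2*δ :=
          le_trans (triv_bound u v huv (g 0)) hvu
        have hsplit : ∫ x in a..b, e (g 0 x) =
            (∫ x in a..u, e (g 0 x)) + (∫ x in u..v, e (g 0 x)) + (∫ x in v..b, e (g 0 x)) := by
          have e1 := intervalIntegral.integral_add_adjacent_intervals
            (hint a u le_rfl hau (huv.trans hvb)) (hint u v hau huv hvb)
          have e2 := intervalIntegral.integral_add_adjacent_intervals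
            (hint a v le_rfl (hau.trans huv) hvb) (hint v b (hau.trans huv) hvb le_rfl)
          rw [← e2, ← e1]
        rw [hsplit]
        calc ‖(∫ x in a..u, e (g 0 x)) + (∫ x in u..v, e (g 0 x)) + (∫ x in v..b, e (g 0 x))‖
            ≤ ‖(∫ x in a..u, e (g 0 x)) + (∫ x in u..v, e (g 0 x))‖ + ‖∫ x in v..b, e (g 0 x)‖ :=
              norm_add_le _ _
          _ ≤ ‖∫ x in a..u, e (g 0 x)‖ + ‖∫ x in u..v, e (g 0 x)‖ + ‖∫ x in v..b, e (g 0 x)‖ := by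
              have := norm_add_le (∫ x in a..u, e (g 0 x)) (∫ x in u..v, e (g 0 x))
              linarith
          _ ≤ 4^d * δ + 2*δ + 4^d * δ := by linarith
          _ ≤ 4^(d+1) * δ := by
              rw [pow_succ]
              nlinarith
      · have hlow : ∀ x ∈ Set.Icc a b, lam*δ ≤ |g d x| := by
          intro x hx
          by_contra hlt
          push_neg at hlt
          exact hTne ⟨x, hx, hlt⟩
        have := houter a b le_rfl hab le_rfl (fun x hx => hlow x (Set.Ioo_subset_Icc_self hx))
        calc ‖∫ x in a..b, e (g 0 x)‖ ≤ 4^d * δ := this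
          _ ≤ 4^(d+1) * δ := by rw [pow_succ]; nlinarith
    -- now case on the sign of f (d+1)
    rw [hcast]
    rcases mvdc_sign hab hlam (hcont (d+1) (by omega)) hlb with hpos | hneg
    · exact core f (fun i hi => hcont i (by omega)) (fun i hi => hder i (by omega)) hpos
    · have hres := core (fun i x => -(f i x))
        (fun i hi => (hcont i (by omega)).neg)
        (fun i hi x hx => (hder i (by omega) x hx).neg)
        (fun x hx => by have := hneg x hx; show lam ≤ -(f (d+1) x); linarith)
      have hconj : ∫ x in a..b, e (-(f 0 x)) = (starRingEnd ℂ) (∫ x in a..b, e (f 0 x)) := by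
        rw [← mvdc_int_conj]
        apply intervalIntegral.integral_congr
        intro x hx
        exact e_neg (f 0 x)
      rw [hconj] at hres
      rwa [RCLike.norm_conj] at hres

lemma mvdc_rolle {a b : ℝ} {g h : ℝ → ℝ} {m : ℕ} (c : ℝ)
    (hgc : ContinuousOn g (Set.Icc a b))
    (hgd : ∀ x ∈ Set.Ioo a b, HasDerivAt g (h x) x)
    (hz : ({x ∈ Set.Icc a b | h x = 0}).encard ≤ (m : ℕ∞)) :
    ({x ∈ Set.Icc a b | g x = c}).encard ≤ ((m+1 : ℕ) : ℕ∞) := by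
  by_contra hcon
  push_neg at hcon
  have hge : ((m+2:ℕ) : ℕ∞) ≤ ({x ∈ Set.Icc a b | g x = c}).encard := by
    have h1 := Order.add_one_le_of_lt hcon
    calc ((m+2:ℕ) : ℕ∞) = ((m+1:ℕ) : ℕ∞) + 1 := by push_cast; ring
      _ ≤ _ := h1
  obtain ⟨t, hts, htc⟩ := Set.exists_subset_encard_eq hge
  have htfin : t.Finite := Set.encard_ne_top_iff.1 (by rw [htc]; exact ENat.coe_ne_top _)
  have hcard : htfin.toFinset.card = m+2 := by
    have h2 := htfin.encard_eq_coe_toFinset_card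
    rw [htc] at h2
    exact_mod_cast h2.symm
  set σ := htfin.toFinset.orderIsoOfFin hcard with hσ
  have hzmem : ∀ j : Fin (m+2), (σ j : ℝ) ∈ t := fun j => by
    have := (σ j).2; rwa [Set.Finite.mem_toFinset] at this
  have hzIcc : ∀ j, (σ j : ℝ) ∈ Set.Icc a b := fun j => (hts (hzmem j)).1
  have hzval : ∀ j, g (σ j : ℝ) = c := fun j => (hts (hzmem j)).2
  have hmono : StrictMono (fun j : Fin (m+2) => (σ j : ℝ)) := fun i j hij => σ.strictMono hij
  have hroll : ∀ j : Fin (m+1), ∃ y,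
      y ∈ Set.Ioo ((σ j.castSucc : ℝ)) ((σ j.succ : ℝ)) ∧ h y = 0 := by
    intro j
    have hlt : ((σ j.castSucc : ℝ)) < (σ j.succ : ℝ) := hmono (Fin.castSucc_lt_succ (i := j))
    have hco : ContinuousOn g (Set.Icc (σ j.castSucc : ℝ) (σ j.succ : ℝ)) :=
      hgc.mono (Set.Icc_subset_Icc (hzIcc _).1 (hzIcc _).2)
    have heq : g (σ j.castSucc : ℝ) = g (σ j.succ : ℝ) := by rw [hzval, hzval]
    have hdd : ∀ x ∈ Set.Ioo ((σ j.castSucc : ℝ)) ((σ j.succ : ℝ)), HasDerivAt g (h x) x :=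
      fun x hx => hgd x ⟨lt_of_le_of_lt (hzIcc _).1 hx.1, lt_of_lt_of_le hx.2 (hzIcc _).2⟩
    obtain ⟨y, hy1, hy2⟩ := exists_hasDerivAt_eq_zero hlt hco heq hdd
    exact ⟨y, hy1, hy2⟩
  choose y hy1 hy2 using hroll
  have hymem : ∀ j, y j ∈ {x ∈ Set.Icc a b | h x = 0} := fun j =>
    ⟨⟨le_trans (hzIcc j.castSucc).1 (hy1 j).1.le, le_trans (hy1 j).2.le (hzIcc j.succ).2⟩, hy2 j⟩
  have hstr : StrictMono y := by
    intro i j hij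
    calc y i < (σ i.succ : ℝ) := (hy1 i).2
      _ ≤ (σ j.castSucc : ℝ) := σ.monotone (by
          rw [Fin.succ_le_castSucc_iff]; exact hij)
      _ < y j := (hy1 j).1
  have hsub : Set.range y ⊆ {x ∈ Set.Icc a b | h x = 0} := Set.range_subset_iff.2 hymem
  have hrc : (Set.range y).encard = ((m+1:ℕ) : ℕ∞) := by
    rw [← Set.image_univ, Set.InjOn.encard_image (hstr.injective.injOn), Set.encard_univ]
    simp
  have hfinal : ((m+1:ℕ) : ℕ∞) ≤ (m : ℕ∞) := by
    rw [← hrc]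
    exact le_trans (Set.encard_le_encard hsub) hz
  have : m + 1 ≤ m := by exact_mod_cast hfinal
  omega
lemma mvdc_mono_deriv_nonneg (g : ℝ → ℝ) (A B x g2 : ℝ) (hx : x ∈ Set.Ioo A B)
    (hm : MonotoneOn g (Set.Icc A B)) (hD : HasDerivAt g g2 x) : 0 ≤ g2 := by
  have hxI : x ∈ Set.Icc A B := Set.Ioo_subset_Icc_self hx
  have h1 : HasDerivWithinAt g g2 (Set.Ioo x B) x := hD.hasDerivWithinAt
  have h2 : Filter.Tendsto (slope g x) (nhdsWithin x (Set.Ioo x B)) (nhds g2) := by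
    have h3 := hasDerivWithinAt_iff_tendsto_slope.1 h1
    apply h3.mono_left
    apply nhdsWithin_mono
    intro y hy
    exact ⟨hy, fun hc => lt_irrefl y (by rw [Set.mem_singleton_iff] at hc; rw [hc] at hy ⊢; exact hy.1)⟩
  have hne : (nhdsWithin x (Set.Ioo x B)).NeBot := by
    rw [← mem_closure_iff_nhdsWithin_neBot, closure_Ioo (ne_of_lt hx.2)]
    exact ⟨le_rfl, hx.2.le⟩
  apply ge_of_tendsto h2
  apply eventually_nhdsWithin_of_forall
  intro y hy
  have hyI : y ∈ Set.Icc A B := ⟨le_trans hx.1.le hy.1.le, hy.2.le⟩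
  rw [slope_def_field]
  have := hm hxI hyI hy.1.le
  have hpos : 0 < y - x := by linarith [hy.1]
  rw [div_eq_mul_inv]
  apply mul_nonneg (by linarith) (by positivity)

lemma mvdc_encard_biUnion (s : Finset ℕ) (f : ℕ → Set ℝ) (m : ℕ)
    (h : ∀ i ∈ s, (f i).encard ≤ (m:ℕ∞)) :
    (⋃ i ∈ s, f i).encard ≤ ((s.card * m : ℕ) : ℕ∞) := by
  induction s using Finset.induction_on with
  | empty => simp
  | @insert a s ha ih =>
    rw [Finset.set_biUnion_insert]
    calc (f a ∪ ⋃ i ∈ s, f i).encard ≤ (f a).encard + (⋃ i ∈ s, f i).encard :=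
        Set.encard_union_le _ _
      _ ≤ (m:ℕ∞) + ((s.card * m : ℕ):ℕ∞) :=
        add_le_add (h a (Finset.mem_insert_self a s))
          (ih (fun i hi => h i (Finset.mem_insert_of_mem hi)))
      _ = (((insert a s).card * m : ℕ) : ℕ∞) := by
          rw [Finset.card_insert_of_notMem ha]; push_cast; ring

/-- Modified van der Corput lemma: if on `J = [A,A+1]` at every point one of the first `d`
derivatives of `φ` is at least `λ`, and `φ^{(d)}` has at most `k` zeros in `J`
(with `φ'` monotone if `d = 1`), then `|∫_J e(φ)| ≤ C_{d,k} λ^{-1/d}`. -/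
theorem modified_van_der_corput (d k : ℕ) (hd : 1 ≤ d) :
    ∃ C > (0 : ℝ), ∀ (A : ℝ), 0 < A → ∀ (φ : ℝ → ℝ) (lam : ℝ),
      ContDiffOn ℝ (⊤ : ℕ∞) φ (Set.Icc A (A + 1)) →
      ({α ∈ Set.Icc A (A + 1) |
          iteratedDerivWithin d φ (Set.Icc A (A + 1)) α = 0}).encard ≤ (k : ℕ∞) →
      0 < lam →
      (∀ α ∈ Set.Icc A (A + 1), ∃ i, 1 ≤ i ∧ i ≤ d ∧
        lam ≤ |iteratedDerivWithin i φ (Set.Icc A (A + 1)) α|) →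
      (d = 1 → MonotoneOn (derivWithin φ (Set.Icc A (A + 1))) (Set.Icc A (A + 1)) ∨
        AntitoneOn (derivWithin φ (Set.Icc A (A + 1))) (Set.Icc A (A + 1))) →
      ‖∫ α in Set.Icc A (A + 1), e (φ α)‖ ≤ C * lam ^ (-(1 : ℝ) / d) := by
  refine ⟨(((2*d+2) * (k+d) + 1 : ℕ) : ℝ) * 4^d + 4, by positivity, ?_⟩
  intro A hA φ lam hφ hzeros hlam hmax hmono1
  set s : Set ℝ := Set.Icc A (A+1) with hsdef
  have hA1 : A < A + 1 := by linarith
  have hud : UniqueDiffOn ℝ s := uniqueDiffOn_Icc hA1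
  set f : ℕ → ℝ → ℝ := fun i => iteratedDerivWithin i φ s with hf
  have hcont : ∀ i : ℕ, ContinuousOn (f i) s := fun i =>
    hφ.continuousOn_iteratedDerivWithin (by exact_mod_cast le_top) hud
  have hder : ∀ i : ℕ, ∀ x ∈ Set.Ioo A (A+1), HasDerivAt (f i) (f (i+1) x) x := by
    intro i x hx
    have hxI : x ∈ s := Set.Ioo_subset_Icc_self hx
    have hdiff : DifferentiableOn ℝ (f i) s :=
      hφ.differentiableOn_iteratedDerivWithin
        (by exact_mod_cast WithTop.coe_lt_coe.2 (Ne.lt_top (ENat.coe_ne_top i))) hud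
    have h1 : HasDerivWithinAt (f i) (derivWithin (f i) s x) s x := (hdiff x hxI).hasDerivWithinAt
    have h2 := h1.hasDerivAt (Icc_mem_nhds hx.1 hx.2)
    rwa [hf, ← iteratedDerivWithin_succ] at h2
  -- rewrite the goal as an interval integral of e (f 0)
  have hset : ‖∫ α in s, e (φ α)‖ = ‖∫ x in A..(A+1), e (f 0 x)‖ := by
    congr 1
    rw [MeasureTheory.integral_Icc_eq_integral_Ioc,
      ← intervalIntegral.integral_of_le (by linarith : A ≤ A+1)]
    apply intervalIntegral.integral_congr
    intro x hx
    simp [hf, iteratedDerivWithin_zero]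
  rw [hset]
  set X : ℝ := lam ^ (-(1:ℝ)/d) with hX
  have hXpos : 0 < X := Real.rpow_pos_of_pos hlam _
  rcases le_or_gt lam 1 with hlam1 | hlam1
  · -- trivial case lam ≤ 1
    have h1 : ‖∫ x in A..(A+1), e (f 0 x)‖ ≤ 1 := by
      have := triv_bound A (A+1) (by linarith) (f 0)
      linarith
    have hX1 : 1 ≤ X := Real.one_le_rpow_of_pos_of_le_one_of_nonpos hlam hlam1
      (by
        apply div_nonpos_of_nonpos_of_nonneg <;> simp)
    have hC1 : (1:ℝ) ≤ (((2*d+2) * (k+d) + 1 : ℕ) : ℝ) * 4^d + 4 := by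
      have : (0:ℝ) ≤ (((2*d+2) * (k+d) + 1 : ℕ) : ℝ) * 4^d := by positivity
      linarith
    nlinarith
  rcases eq_or_lt_of_le hd with hd1 | hd2
  · -- case d = 1
    have hd1' : d = 1 := hd1.symm
    subst hd1'
    have hlow : ∀ x ∈ s, lam ≤ |f 1 x| := by
      intro x hx
      obtain ⟨i, hi1, hi2, hil⟩ := hmax x hx
      have : i = 1 := le_antisymm hi2 hi1
      rwa [this] at hil
    have heq1 : ∀ x ∈ s, f 1 x = derivWithin φ s x := fun x hx =>
      congrFun iteratedDerivWithin_one x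
    have hsgn : (∀ x ∈ Set.Ioo A (A+1), 0 ≤ f 2 x) ∨ (∀ x ∈ Set.Ioo A (A+1), f 2 x ≤ 0) := by
      rcases hmono1 rfl with hm | hm
      · left
        intro x hx
        have hm' : MonotoneOn (f 1) s := by
          intro u hu v hv huv
          rw [heq1 u hu, heq1 v hv]
          exact hm hu hv huv
        exact mvdc_mono_deriv_nonneg (f 1) A (A+1) x (f 2 x) hx hm' (hder 1 x hx)
      · right
        intro x hx
        have hm' : MonotoneOn (fun y => -(f 1 y)) s := by
          intro u hu v hv huv
          simp only [neg_le_neg_iff]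
          rw [heq1 u hu, heq1 v hv]
          exact hm hu hv huv
        have := mvdc_mono_deriv_nonneg (fun y => -(f 1 y)) A (A+1) x (-(f 2 x)) hx hm'
          ((hder 1 x hx).neg)
        linarith
    have hres := lemB 1 le_rfl A (A+1) (by linarith) (by linarith) f
      (fun i _ => hcont i) (fun i _ => hder i) lam hlam hlow (fun _ => hsgn)
    have h4 : (4:ℝ) ≤ (((2*1+2) * (k+1) + 1 : ℕ) : ℝ) * 4^1 + 4 := by
      have : (0:ℝ) ≤ (((2*1+2) * (k+1) + 1 : ℕ) : ℝ) * 4^1 := by positivity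
      linarith
    have h5 : (4:ℝ)^1 * lam ^ (-(1:ℝ)/((1:ℕ):ℝ)) = 4 * X := by rw [hX]; norm_num
    rw [h5] at hres
    calc ‖∫ x in A..(A+1), e (f 0 x)‖ ≤ 4 * X := hres
      _ ≤ ((((2*1+2) * (k+1) + 1 : ℕ) : ℝ) * 4^1 + 4) * X :=
        mul_le_mul_of_nonneg_right h4 hXpos.le
  -- main case : 2 ≤ d, 1 < lam
  have hcount : ∀ j : ℕ, 1 ≤ j → j ≤ d → ∀ c : ℝ,
      ({x ∈ Set.Icc A (A+1) | f (d-j) x = c}).encard ≤ ((k + j : ℕ) : ℕ∞) := by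
    intro j hj1
    induction j, hj1 using Nat.le_induction with
    | base =>
      intro hjd c
      have hdd : d - 1 + 1 = d := by omega
      have hb := hder (d-1)
      rw [hdd] at hb
      exact mvdc_rolle c (hcont (d-1)) hb hzeros
    | succ j hj ih =>
      intro hjd c
      have hdd : d - (j+1) + 1 = d - j := by omega
      have hb := hder (d-(j+1))
      rw [hdd] at hb
      have hz := ih (by omega) 0
      have h9 := mvdc_rolle c (hcont (d-(j+1))) hb hz
      have h10 : k + j + 1 = k + (j+1) := by omega
      rwa [h10] at h9
  set B : Set ℝ := ({x ∈ Set.Icc A (A+1) | f d x = 0} ∪ {x ∈ Set.Icc A (A+1) | f 2 x = 0}) ∪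
      ⋃ i ∈ Finset.Icc 1 (d-1),
        ({x ∈ Set.Icc A (A+1) | f i x = lam} ∪ {x ∈ Set.Icc A (A+1) | f i x = -lam}) with hBdef
  have hZany : ∀ i, 1 ≤ i → i ≤ d-1 → ∀ c:ℝ,
      ({x ∈ Set.Icc A (A+1) | f i x = c}).encard ≤ ((k+d:ℕ):ℕ∞) := by
    intro i h1 h2 c
    have h3 := hcount (d-i) (by omega) (by omega) c
    have h4 : d - (d-i) = i := by omega
    rw [h4] at h3
    refine le_trans h3 (Nat.cast_le.2 (by omega))
  have hZd : ({x ∈ Set.Icc A (A+1) | f d x = 0}).encard ≤ ((k+d:ℕ):ℕ∞) :=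
    le_trans hzeros (Nat.cast_le.2 (by omega))
  have hZ2 : ({x ∈ Set.Icc A (A+1) | f 2 x = 0}).encard ≤ ((k+d:ℕ):ℕ∞) := by
    rcases eq_or_lt_of_le (show 2 ≤ d from hd2) with h2d | h3d
    · have heq : ({x ∈ Set.Icc A (A+1) | f 2 x = 0}) = ({x ∈ Set.Icc A (A+1) | f d x = 0}) := by
        rw [← h2d]
      rw [heq]
      exact hZd
    · exact hZany 2 (by omega) (by omega) 0
  have hBenc : B.encard ≤ (((2*d+2)*(k+d) : ℕ) : ℕ∞) := by
    have hu1 := Set.encard_union_le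
      ({x ∈ Set.Icc A (A+1) | f d x = 0} ∪ {x ∈ Set.Icc A (A+1) | f 2 x = 0})
      (⋃ i ∈ Finset.Icc 1 (d-1),
        ({x ∈ Set.Icc A (A+1) | f i x = lam} ∪ {x ∈ Set.Icc A (A+1) | f i x = -lam}))
    have hu2 := Set.encard_union_le {x ∈ Set.Icc A (A+1) | f d x = 0}
      {x ∈ Set.Icc A (A+1) | f 2 x = 0}
    have hu3 := mvdc_encard_biUnion (Finset.Icc 1 (d-1))
      (fun i => {x ∈ Set.Icc A (A+1) | f i x = lam} ∪ {x ∈ Set.Icc A (A+1) | f i x = -lam})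
      (2*(k+d))
      (fun i hi => by
        rw [Finset.mem_Icc] at hi
        refine le_trans (Set.encard_union_le _ _) ?_
        have e1 := hZany i hi.1 hi.2 lam
        have e2 := hZany i hi.1 hi.2 (-lam)
        calc _ ≤ ((k+d:ℕ):ℕ∞) + ((k+d:ℕ):ℕ∞) := add_le_add e1 e2
          _ = ((2*(k+d) : ℕ) : ℕ∞) := by push_cast; ring)
    have hcard : (Finset.Icc 1 (d-1)).card = d - 1 := by
      rw [Nat.card_Icc]
      omega
    rw [hcard] at hu3
    rw [hBdef]
    refine le_trans hu1 (le_trans (add_le_add (le_trans hu2 (add_le_add hZd hZ2)) hu3) ?_)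
    have harith : (k+d) + (k+d) + (d-1) * (2*(k+d)) ≤ (2*d+2)*(k+d) := by
      have h1 : (d-1) * (2*(k+d)) ≤ d * (2*(k+d)) := Nat.mul_le_mul_right _ (by omega)
      have h2 : (k+d) + (k+d) + d * (2*(k+d)) = (2*d+2)*(k+d) := by ring
      omega
    calc ((k+d:ℕ):ℕ∞) + ((k+d:ℕ):ℕ∞) + (((d-1) * (2*(k+d)) : ℕ) : ℕ∞)
        = (((k+d) + (k+d) + (d-1) * (2*(k+d)) : ℕ) : ℕ∞) := by push_cast; ring
      _ ≤ _ := Nat.cast_le.2 harith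
  have hBfin : B.Finite := (Set.encard_le_coe_iff.1 hBenc).1
  -- key lemma : intervals with no bad point inside
  have key : ∀ p q : ℝ, A ≤ p → p ≤ q → q ≤ A+1 → B ∩ Set.Ioo p q = ∅ →
      ‖∫ x in p..q, e (f 0 x)‖ ≤ 4^d * X := by
    intro p q hAp hpq hq1 hempty
    rcases eq_or_lt_of_le hpq with rfl | hpq'
    · simp only [intervalIntegral.integral_same, norm_zero]
      positivity
    have hsubI : Set.Icc p q ⊆ Set.Icc A (A+1) := Set.Icc_subset_Icc hAp hq1
    have hsubO : Set.Ioo p q ⊆ Set.Ioo A (A+1) := Set.Ioo_subset_Ioo hAp hq1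
    have hBno : ∀ x ∈ Set.Ioo p q, x ∉ B := by
      intro x hx hxB
      have : x ∈ B ∩ Set.Ioo p q := ⟨hxB, hx⟩
      rw [hempty] at this
      exact this
    have nocross : ∀ i, 1 ≤ i → i ≤ d-1 → ∀ x ∈ Set.Ioo p q, ∀ z ∈ Set.Ioo p q,
        |f i x| < lam → lam ≤ |f i z| → False := by
      intro i hi1 hi2 x hx z hz hlt hge
      have hiB : ∀ y ∈ Set.Ioo p q, |f i y| = lam → False := by
        intro y hy hyval
        rcases (abs_eq hlam.le).1 hyval with h | h
        · apply hBno y hy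
          refine Or.inr (Set.mem_biUnion (Finset.mem_Icc.2 ⟨hi1, hi2⟩) ?_)
          exact Or.inl ⟨hsubO.trans Set.Ioo_subset_Icc_self hy, h⟩
        · apply hBno y hy
          refine Or.inr (Set.mem_biUnion (Finset.mem_Icc.2 ⟨hi1, hi2⟩) ?_)
          exact Or.inr ⟨hsubO.trans Set.Ioo_subset_Icc_self hy, h⟩
      rcases le_total x z with hxz | hxz
      · have hsub2 : Set.Icc x z ⊆ Set.Ioo p q := fun w hw => ⟨lt_of_lt_of_le hx.1 hw.1, lt_of_le_of_lt hw.2 hz.2⟩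
        have habs : ContinuousOn (fun w => |f i w|) (Set.Icc x z) :=
          ((hcont i).mono (hsub2.trans (hsubO.trans Set.Ioo_subset_Icc_self))).abs
        obtain ⟨y, hyI, hyval⟩ := intermediate_value_Icc hxz habs ⟨hlt.le, hge⟩
        exact hiB y (hsub2 hyI) hyval
      · have hsub2 : Set.Icc z x ⊆ Set.Ioo p q := fun w hw => ⟨lt_of_lt_of_le hz.1 hw.1, lt_of_le_of_lt hw.2 hx.2⟩
        have habs : ContinuousOn (fun w => |f i w|) (Set.Icc z x) :=
          ((hcont i).mono (hsub2.trans (hsubO.trans Set.Ioo_subset_Icc_self))).abs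
        obtain ⟨y, hyI, hyval⟩ := intermediate_value_Icc' hxz habs ⟨hlt.le, hge⟩
        exact hiB y (hsub2 hyI) hyval
    set mid : ℝ := (p+q)/2 with hmid
    have hmidI : mid ∈ Set.Ioo p q := ⟨by rw [hmid]; linarith, by rw [hmid]; linarith⟩
    by_cases hex : ∃ i, 1 ≤ i ∧ i ≤ d-1 ∧ lam ≤ |f i mid|
    · obtain ⟨i, hi1, hi2, hil⟩ := hex
      have hlow : ∀ x ∈ Set.Ioo p q, lam ≤ |f i x| := by
        intro x hx
        by_contra hlt
        push_neg at hlt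
        exact nocross i hi1 hi2 x hx mid hmidI hlt hil
      have hlow' : ∀ x ∈ Set.Icc p q, lam ≤ |f i x| :=
        mvdc_le_closure hpq' ((hcont i).mono hsubI).abs hlow
      have hsgn : i = 1 → (∀ x ∈ Set.Ioo p q, 0 ≤ f 2 x) ∨ (∀ x ∈ Set.Ioo p q, f 2 x ≤ 0) := by
        intro _
        by_cases hneg : ∃ x ∈ Set.Ioo p q, f 2 x < 0
        · right
          intro z hz
          by_contra hposz
          push_neg at hposz
          obtain ⟨x, hx, hxneg⟩ := hneg
          have hzero : ∀ y ∈ Set.Ioo p q, f 2 y = 0 → False := by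
            intro y hy hyval
            exact hBno y hy (Or.inl (Or.inr ⟨hsubO.trans Set.Ioo_subset_Icc_self hy, hyval⟩))
          rcases le_total x z with hxz | hxz
          · have hsub2 : Set.Icc x z ⊆ Set.Ioo p q := fun w hw =>
              ⟨lt_of_lt_of_le hx.1 hw.1, lt_of_le_of_lt hw.2 hz.2⟩
            have hc2 : ContinuousOn (f 2) (Set.Icc x z) :=
              (hcont 2).mono (hsub2.trans (hsubO.trans Set.Ioo_subset_Icc_self))
            obtain ⟨y, hyI, hyval⟩ := intermediate_value_Icc hxz hc2 ⟨hxneg.le, hposz.le⟩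
            exact hzero y (hsub2 hyI) hyval
          · have hsub2 : Set.Icc z x ⊆ Set.Ioo p q := fun w hw =>
              ⟨lt_of_lt_of_le hz.1 hw.1, lt_of_le_of_lt hw.2 hx.2⟩
            have hc2 : ContinuousOn (f 2) (Set.Icc z x) :=
              (hcont 2).mono (hsub2.trans (hsubO.trans Set.Ioo_subset_Icc_self))
            obtain ⟨y, hyI, hyval⟩ := intermediate_value_Icc' hxz hc2 ⟨hxneg.le, hposz.le⟩
            exact hzero y (hsub2 hyI) hyval
        · left
          push_neg at hneg
          exact fun x hx => hneg x hx
      have hres := lemB i hi1 p q hpq (by linarith [hsubI ⟨le_refl p, hpq⟩]) f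
        (fun j _ => (hcont j).mono hsubI)
        (fun j _ x hx => hder j x (hsubO hx)) lam hlam hlow' hsgn
      have e1 : lam ^ (-(1:ℝ)/(i:ℝ)) ≤ X := by
        rw [hX]
        apply Real.rpow_le_rpow_of_exponent_le hlam1.le
        rw [neg_div, neg_div, neg_le_neg_iff]
        apply one_div_le_one_div_of_le
        · exact_mod_cast Nat.pos_of_ne_zero (by omega)
        · exact_mod_cast (by omega : i ≤ d)
      have e2 : (4:ℝ)^i ≤ 4^d := by
        apply pow_le_pow_right₀ (by norm_num)
        omega
      calc ‖∫ x in p..q, e (f 0 x)‖ ≤ 4^i * lam ^ (-(1:ℝ)/(i:ℝ)) := hres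
        _ ≤ 4^d * X := by
            apply mul_le_mul e2 e1 (Real.rpow_nonneg hlam.le _) (by positivity)
    · push_neg at hex
      have hlow : ∀ x ∈ Set.Ioo p q, lam ≤ |f d x| := by
        intro x hx
        obtain ⟨i, hi1, hi2, hil⟩ := hmax x (hsubO.trans Set.Ioo_subset_Icc_self hx)
        rcases eq_or_lt_of_le hi2 with hid | hid
        · rwa [hid] at hil
        · exact absurd hil (not_le.2 (by
            by_contra hcon
            push_neg at hcon
            exact nocross i hi1 (by omega) mid hmidI x hx (hex i hi1 (by omega)) hcon))
      have hlow' : ∀ x ∈ Set.Icc p q, lam ≤ |f d x| :=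
        mvdc_le_closure hpq' ((hcont d).mono hsubI).abs hlow
      have hres := lemB d hd p q hpq (by linarith [hsubI ⟨le_refl p, hpq⟩]) f
        (fun j _ => (hcont j).mono hsubI)
        (fun j _ x hx => hder j x (hsubO hx)) lam hlam hlow'
        (fun hdeq => absurd hdeq (by omega))
      exact hres
  -- recursion over the number of bad points
  have hrec : ∀ m : ℕ, ∀ p q : ℝ, A ≤ p → p ≤ q → q ≤ A+1 →
      (B ∩ Set.Ioo p q).encard ≤ (m:ℕ∞) →
      ‖∫ x in p..q, e (f 0 x)‖ ≤ (m+1:ℝ) * (4^d * X) := by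
    intro m
    induction m with
    | zero =>
      intro p q h1 h2 h3 henc
      have hemp : B ∩ Set.Ioo p q = ∅ := by
        rw [← Set.encard_eq_zero]
        exact le_antisymm (by exact_mod_cast henc) zero_le
      have := key p q h1 h2 h3 hemp
      calc ‖∫ x in p..q, e (f 0 x)‖ ≤ 4^d * X := this
        _ ≤ ((0:ℕ)+1:ℝ) * (4^d * X) := by norm_num
    | succ m ih =>
      intro p q h1 h2 h3 henc
      by_cases hne : (B ∩ Set.Ioo p q).Nonempty
      · have hfinS : (B ∩ Set.Ioo p q).Finite := hBfin.inter_of_left _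
        have hfne : hfinS.toFinset.Nonempty := by rwa [Set.Finite.toFinset_nonempty]
        set w := hfinS.toFinset.min' hfne with hw
        have hwmem : w ∈ B ∩ Set.Ioo p q := by
          have := hfinS.toFinset.min'_mem hfne
          rwa [Set.Finite.mem_toFinset] at this
        have hwmin : ∀ x ∈ B ∩ Set.Ioo p q, w ≤ x := fun x hx =>
          Finset.min'_le _ x (by rwa [Set.Finite.mem_toFinset])
        have hpw : p < w := hwmem.2.1
        have hwq : w < q := hwmem.2.2
        have hleft : B ∩ Set.Ioo p w = ∅ := by
          rw [Set.eq_empty_iff_forall_notMem]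
          intro x hx
          have hxS : x ∈ B ∩ Set.Ioo p q := ⟨hx.1, ⟨hx.2.1, lt_trans hx.2.2 hwq⟩⟩
          exact absurd (hwmin x hxS) (not_le.2 hx.2.2)
        have hright : (B ∩ Set.Ioo w q).encard ≤ (m : ℕ∞) := by
          have hsub2 : B ∩ Set.Ioo w q ⊆ (B ∩ Set.Ioo p q) \ {w} := fun x hx =>
            ⟨⟨hx.1, ⟨lt_trans hpw hx.2.1, hx.2.2⟩⟩, fun hc => by
              rw [Set.mem_singleton_iff] at hc
              rw [hc] at hx
              exact lt_irrefl w hx.2.1⟩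
          have h5 := Set.encard_diff_singleton_add_one hwmem
          have h6 : ((B ∩ Set.Ioo p q) \ {w}).encard ≤ (m : ℕ∞) := by
            have h7 : ((B ∩ Set.Ioo p q) \ {w}).encard + 1 ≤ (m : ℕ∞) + 1 := by
              rw [h5]
              calc (B ∩ Set.Ioo p q).encard ≤ ((m+1 : ℕ) : ℕ∞) := henc
                _ = (m:ℕ∞) + 1 := by push_cast; ring
            exact (ENat.add_le_add_iff_right (by simp)).1 h7
          exact le_trans (Set.encard_le_encard hsub2) h6
        have ha1 := key p w h1 (le_of_lt hpw) (by linarith) hleft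
        have ha2 := ih w q (by linarith) (le_of_lt hwq) h3 hright
        have hintl : IntervalIntegrable (fun x => e (f 0 x)) volume p w :=
          e_intable ((hcont 0).mono (by
            rw [Set.uIcc_of_le (le_of_lt hpw)]
            exact Set.Icc_subset_Icc h1 (by linarith)))
        have hintr : IntervalIntegrable (fun x => e (f 0 x)) volume w q :=
          e_intable ((hcont 0).mono (by
            rw [Set.uIcc_of_le (le_of_lt hwq)]
            exact Set.Icc_subset_Icc (by linarith) h3))
        have hsplit := intervalIntegral.integral_add_adjacent_intervals hintl hintr
        rw [← hsplit]
        calc ‖(∫ x in p..w, e (f 0 x)) + ∫ x in w..q, e (f 0 x)‖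
            ≤ ‖∫ x in p..w, e (f 0 x)‖ + ‖∫ x in w..q, e (f 0 x)‖ := norm_add_le _ _
          _ ≤ 4^d * X + (m+1:ℝ) * (4^d * X) := add_le_add ha1 ha2
          _ = ((m+1:ℕ)+1:ℝ) * (4^d * X) := by push_cast; ring
      · rw [Set.not_nonempty_iff_eq_empty] at hne
        have := key p q h1 h2 h3 hne
        have hfac : (1:ℝ) ≤ ((m+1:ℕ)+1:ℝ) := by push_cast; linarith
        calc ‖∫ x in p..q, e (f 0 x)‖ ≤ 4^d * X := this
          _ ≤ ((m+1:ℕ)+1:ℝ) * (4^d * X) := le_mul_of_one_le_left (by positivity) hfac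
  -- conclude
  have hloop := hrec ((2*d+2)*(k+d)) A (A+1) le_rfl (by linarith) le_rfl
    (le_trans (Set.encard_le_encard Set.inter_subset_left) hBenc)
  calc ‖∫ x in A..(A+1), e (f 0 x)‖ ≤ (((2*d+2)*(k+d) : ℕ) + 1 : ℝ) * (4^d * X) := hloop
    _ ≤ ((((2*d+2) * (k+d) + 1 : ℕ) : ℝ) * 4^d + 4) * X := by
        have h1 : (((2*d+2)*(k+d) : ℕ) + 1 : ℝ) = (((2*d+2) * (k+d) + 1 : ℕ) : ℝ) := by push_cast; ring
        rw [h1]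
        nlinarith [hXpos]
end

section
/- Let f : ℝ → ℝ be smooth and compactly supported, and let ε > 0 and t > 0. Then there exists a constant C > 0 (depending on f, ε, t) such that for all real α and all integers N ≥ 1, | R_2(f,α,N) − (1/N²) Σ_{|n| ≤ N^{1+ε}} f̂(n/N) Σ_{1 ≤ x_1 ≠ x_2 ≤ N} e(n(x_1^α − x_2^α)) | ≤ C N^{−t}, where the sum over n is over integers n with |n| ≤ N^{1+ε}. -/
open MeasureTheory Filter Finset

/-- The Fourier transform `f̂(ξ) = ∫ f(x) e(−xξ) dx`. -/
noncomputable def fourierHat (f : ℝ → ℝ) (ξ : ℝ) : ℂ := ∫ x : ℝ, (f x : ℂ) * e (-(x * ξ))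

/-- The pair correlation sum `R_2(f,α,N)` of the sequence `(n^α)`. -/
noncomputable def R2 (f : ℝ → ℝ) (α : ℝ) (N : ℕ) : ℝ :=
  (N : ℝ)⁻¹ * ∑ x₁ ∈ Finset.Icc 1 N, ∑ x₂ ∈ (Finset.Icc 1 N).erase x₁,
    ∑' m : ℤ, f ((N : ℝ) * ((x₁ : ℝ) ^ α - (x₂ : ℝ) ^ α - (m : ℝ)))

namespace Trunc

open Real FourierTransform

lemma e_eq (x : ℝ) : e x = Real.fourierChar x := by
  rw [Real.fourierChar_apply, e]; push_cast; ring_nf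

lemma e_add (x y : ℝ) : e (x + y) = e x * e y := by
  simp only [e, ← Complex.exp_add]; push_cast; ring_nf

lemma abs_e (x : ℝ) : ‖e x‖ = 1 := by
  simp [e_eq, Circle.norm_coe]

lemma abs_e' (x : ℝ) : ‖e x‖ = 1 := by
  exact abs_e x

lemma fourierHat_eq (f : ℝ → ℝ) (ξ : ℝ) : fourierHat f ξ = 𝓕 (fun x => (f x : ℂ)) ξ := by
  unfold fourierHat
  rw [Real.fourier_eq]
  congr 1; ext x
  rw [e_eq]
  simp [Circle.smul_def, RCLike.inner_apply, mul_comm]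

variable {f : ℝ → ℝ}

lemma cont_ofReal (hf : ContDiff ℝ (⊤ : ℕ∞) f) :
    ContDiff ℝ (⊤ : ℕ∞) (fun x : ℝ => (f x : ℂ)) :=
  Complex.ofRealCLM.contDiff.comp hf

lemma hcs_ofReal (hsupp : HasCompactSupport f) :
    HasCompactSupport (fun x : ℝ => (f x : ℂ)) :=
  hsupp.comp_left (g := Complex.ofReal) rfl

/-- The Schwartz map associated to a smooth compactly supported function. -/
noncomputable def toS (f : ℝ → ℝ) (hf : ContDiff ℝ (⊤ : ℕ∞) f)
    (hsupp : HasCompactSupport f) : SchwartzMap ℝ ℂ where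
  toFun x := (f x : ℂ)
  smooth' := cont_ofReal hf
  decay' := by
    intro k n
    have hg : HasCompactSupport (fun x : ℝ => (f x : ℂ)) := hcs_ofReal hsupp
    have h1 : HasCompactSupport (iteratedFDeriv ℝ n (fun x : ℝ => (f x : ℂ))) :=
      hg.iteratedFDeriv n
    have h2 : Continuous (iteratedFDeriv ℝ n (fun x : ℝ => (f x : ℂ))) :=
      (cont_ofReal hf).continuous_iteratedFDeriv (mod_cast le_top)
    have hF : HasCompactSupport
        ((fun x : ℝ => ‖x‖ ^ k) * fun x => ‖iteratedFDeriv ℝ n (fun x : ℝ => (f x : ℂ)) x‖) :=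
      HasCompactSupport.mul_left h1.norm
    have hFc : Continuous
        ((fun x : ℝ => ‖x‖ ^ k) * fun x => ‖iteratedFDeriv ℝ n (fun x : ℝ => (f x : ℂ)) x‖) :=
      ((continuous_norm.pow k)).mul h2.norm
    obtain ⟨C, hC⟩ := hFc.bounded_above_of_compact_support hF
    exact ⟨C, fun x => (le_abs_self _).trans ((Real.norm_eq_abs _) ▸ hC x)⟩

/-- Decay of the Fourier transform. -/
lemma hat_decay (hf : ContDiff ℝ (⊤ : ℕ∞) f) (hsupp : HasCompactSupport f) (k : ℕ) :
    ∃ C > 0, ∀ ξ : ℝ, ‖fourierHat f ξ‖ ≤ C ∧ |ξ| ^ k * ‖fourierHat f ξ‖ ≤ C := by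
  set F := toS f hf hsupp
  have hFT : ∀ ξ : ℝ, fourierHat f ξ = SchwartzMap.fourierTransformCLM ℝ F ξ := by
    intro ξ
    rw [fourierHat_eq, SchwartzMap.fourierTransformCLM_apply]
    rfl
  obtain ⟨C0, hC0pos, hC0⟩ := (SchwartzMap.fourierTransformCLM ℝ F).decay 0 0
  obtain ⟨Ck, hCkpos, hCk⟩ := (SchwartzMap.fourierTransformCLM ℝ F).decay k 0
  refine ⟨max C0 Ck, lt_max_of_lt_left hC0pos, fun ξ => ⟨?_, ?_⟩⟩
  · have := hC0 ξ
    rw [pow_zero, one_mul, norm_iteratedFDeriv_zero] at this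
    rw [hFT]
    exact this.trans (le_max_left _ _)
  · have := hCk ξ
    rw [norm_iteratedFDeriv_zero, Real.norm_eq_abs] at this
    rw [hFT]
    exact this.trans (le_max_right _ _)

lemma summable_inv_sq : Summable (fun n : ℤ => ((n : ℝ) ^ 2)⁻¹) := by
  simpa [one_div] using Real.summable_one_div_int_pow.mpr (by norm_num : 1 < 2)

lemma tail_bound (G : ℤ → ℂ) (B : ℝ) (K : Set ℤ) (hGnorm : Summable fun n => ‖G n‖)
    (hkey : ∀ n ∈ K, ‖G n‖ ≤ B * ((n : ℝ) ^ 2)⁻¹) (hB : 0 ≤ B) :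
    ‖∑' n : K, G (n : ℤ)‖ ≤ B * ∑' n : ℤ, ((n : ℝ) ^ 2)⁻¹ := by
  calc ‖∑' n : K, G (n : ℤ)‖ ≤ ∑' n : K, ‖G (n : ℤ)‖ :=
        norm_tsum_le_tsum_norm (hGnorm.subtype _)
    _ ≤ ∑' n : K, B * ((((n : ℤ)) : ℝ) ^ 2)⁻¹ :=
        Summable.tsum_le_tsum (fun i => hkey (i : ℤ) i.2) (hGnorm.subtype _)
          ((summable_inv_sq.mul_left B).subtype _)
    _ = B * ∑' n : K, ((((n : ℤ)) : ℝ) ^ 2)⁻¹ := tsum_mul_left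
    _ ≤ B * ∑' n : ℤ, ((n : ℝ) ^ 2)⁻¹ :=
        mul_le_mul_of_nonneg_left
          (Summable.tsum_subtype_le (fun n : ℤ => ((n : ℝ) ^ 2)⁻¹) _ (fun n => by positivity)
            summable_inv_sq) hB

/-- Poisson summation for the dilated/translated function. -/
lemma poisson (hf : ContDiff ℝ (⊤ : ℕ∞) f) (hsupp : HasCompactSupport f)
    (y : ℝ) (N : ℕ) (hN : 1 ≤ N) :
    ∑' m : ℤ, ((f ((N : ℝ) * (y - (m : ℝ))) : ℂ)) =
      (((N : ℝ)⁻¹ : ℝ) : ℂ) * ∑' n : ℤ, fourierHat f ((n : ℝ) / N) * e ((n : ℝ) * y) := by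
  have hN0 : (0 : ℝ) < (N : ℝ) := Nat.cast_pos.mpr hN
  set g : ℝ → ℂ := fun x => (f x : ℂ) with hg
  set h : ℝ → ℂ := fun x => g ((N : ℝ) * (y - x)) with hh
  have hFh : ∀ ξ : ℝ, 𝓕 h ξ =
      (((N : ℝ)⁻¹ : ℝ) : ℂ) * (e (-(y * ξ)) * fourierHat f (-(ξ / N))) := by
    intro ξ
    set φ : ℝ → ℂ := fun u => g u * e (-((y - u / N) * ξ)) with hφ
    have step1 : 𝓕 h ξ = ∫ x : ℝ, φ ((N : ℝ) * (y - x)) := by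
      rw [Real.fourier_eq]
      congr 1; ext x
      have hyx : y - ((N : ℝ) * (y - x)) / N = x := by field_simp; ring
      simp only [hφ, hh, hg, hyx]
      rw [e_eq]
      simp [Circle.smul_def, RCLike.inner_apply, mul_comm]
    have step2 : ∫ x : ℝ, φ ((N : ℝ) * (y - x)) = |((N : ℝ))⁻¹| • ∫ u : ℝ, φ u := by
      have e1 : ∀ x : ℝ, φ ((N : ℝ) * (y - x)) = (fun z => φ ((N : ℝ) * y - z)) ((N : ℝ) * x) := by
        intro x; simp only []; ring_nf
      calc ∫ x : ℝ, φ ((N : ℝ) * (y - x))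
          = ∫ x : ℝ, (fun z => φ ((N : ℝ) * y - z)) ((N : ℝ) * x) := by simp_rw [e1]
        _ = |((N : ℝ))⁻¹| • ∫ z : ℝ, φ ((N : ℝ) * y - z) := by
            simpa using MeasureTheory.Measure.integral_comp_mul_left
              (fun z => φ ((N : ℝ) * y - z)) (N : ℝ)
        _ = |((N : ℝ))⁻¹| • ∫ u : ℝ, φ u := by rw [integral_sub_left_eq_self]
    have step3 : ∫ u : ℝ, φ u = e (-(y * ξ)) * fourierHat f (-(ξ / N)) := by
      have e2 : ∀ u : ℝ, φ u = e (-(y * ξ)) * (g u * e (-(u * (-(ξ / N))))) := by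
        intro u
        have harg : -((y - u / N) * ξ) = (-(y * ξ)) + (-(u * (-(ξ / N)))) := by ring
        simp only [hφ, harg, e_add]; ring
      simp_rw [e2]
      rw [MeasureTheory.integral_const_mul, fourierHat]
    rw [step1, step2, step3, abs_of_pos (inv_pos.mpr hN0), Complex.real_smul]
  have hcont : Continuous h :=
    (Complex.continuous_ofReal.comp hf.continuous).comp (by continuity)
  have hcs : HasCompactSupport h :=
    (hcs_ofReal hsupp).comp_homeomorph
      ((Homeomorph.subLeft y).trans (Homeomorph.mulLeft₀ (N : ℝ) hN0.ne'))
  have h0 : ∀ᶠ x in cocompact ℝ, h x = 0 := by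
    filter_upwards [Filter.mem_cocompact.mpr ⟨tsupport h, hcs, subset_rfl⟩] with x hx
    exact image_eq_zero_of_notMem_tsupport hx
  have hbig : h =O[cocompact ℝ] (fun x : ℝ => |x| ^ (-2 : ℝ)) := by
    apply Asymptotics.IsBigO.of_bound 1
    filter_upwards [h0] with x hx
    rw [hx]
    simp only [norm_zero, one_mul, Real.norm_eq_abs]
    positivity
  have hsum : Summable fun n : ℤ => 𝓕 h n := by
    obtain ⟨C, hCpos, hC⟩ := hat_decay hf hsupp 2
    apply Summable.of_norm_bounded_eventually (g := fun n : ℤ => (C * N) * ((n : ℝ) ^ 2)⁻¹)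
      (summable_inv_sq.mul_left _)
    filter_upwards [eventually_cofinite_ne (0 : ℤ)] with n hn
    have hn0 : ((n : ℝ)) ≠ 0 := Int.cast_ne_zero.mpr hn
    have hn2 : (0 : ℝ) < (n : ℝ) ^ 2 := by positivity
    have hnorm : ‖𝓕 h (n : ℝ)‖ = (N : ℝ)⁻¹ * ‖fourierHat f (-(↑n / ↑N))‖ := by
      rw [hFh, norm_mul, norm_mul, abs_e, Complex.norm_real, Real.norm_eq_abs,
        abs_of_pos (inv_pos.mpr hN0), one_mul]
    have h2 := (hC (-(↑n / ↑N))).2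
    have habs : |(-(↑n / ↑N) : ℝ)| ^ 2 = (n : ℝ) ^ 2 / (N : ℝ) ^ 2 := by
      rw [abs_neg, sq_abs, div_pow]
    rw [habs] at h2
    have hfb : ‖fourierHat f (-(↑n / ↑N))‖ ≤ C * (N : ℝ) ^ 2 / (n : ℝ) ^ 2 := by
      rw [le_div_iff₀ hn2]
      have h3 := mul_le_mul_of_nonneg_right h2 (pow_pos hN0 2).le
      field_simp at h3
      nlinarith [h3]
    rw [hnorm]
    calc (N : ℝ)⁻¹ * ‖fourierHat f (-(↑n / ↑N))‖
        ≤ (N : ℝ)⁻¹ * (C * (N : ℝ) ^ 2 / (n : ℝ) ^ 2) := by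
          exact mul_le_mul_of_nonneg_left hfb (inv_nonneg.mpr hN0.le)
      _ = (C * N) * ((n : ℝ) ^ 2)⁻¹ := by field_simp
  have key := Real.tsum_eq_tsum_fourier_of_rpow_decay_of_summable hcont
    one_lt_two hbig hsum 0
  simp only [zero_add, QuotientAddGroup.mk_zero, fourier_eval_zero, mul_one] at key
  rw [key]
  have e3 : ∀ n : ℤ, 𝓕 h ((-n : ℤ) : ℝ) =
      (((N : ℝ)⁻¹ : ℝ) : ℂ) * (fourierHat f ((n : ℝ) / N) * e ((n : ℝ) * y)) := by
    intro n
    have hcast : ((-n : ℤ) : ℝ) = -(n : ℝ) := by push_cast; ring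
    rw [hcast, hFh]
    have a1 : -(y * -(n : ℝ)) = (n : ℝ) * y := by ring
    have a2 : -(-(n : ℝ) / N) = (n : ℝ) / N := by ring
    rw [a1, a2]; ring
  rw [← Equiv.tsum_eq (Equiv.neg ℤ) (fun n : ℤ => 𝓕 h (n : ℝ))]
  simp only [Equiv.neg_apply]
  simp_rw [e3]
  rw [tsum_mul_left]

end Trunc

set_option maxHeartbeats 2000000 in
theorem truncation_lemma (f : ℝ → ℝ) (hf : ContDiff ℝ (⊤ : ℕ∞) f)
    (hsupp : HasCompactSupport f) (ε t : ℝ) (hε : 0 < ε) (ht : 0 < t) :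
    ∃ C > (0 : ℝ), ∀ (α : ℝ) (N : ℕ), 1 ≤ N →
      ‖((R2 f α N : ℂ) -
        ((N : ℂ) ^ 2)⁻¹ * ∑ n ∈ Finset.Icc (-⌊(N : ℝ) ^ (1 + ε)⌋) ⌊(N : ℝ) ^ (1 + ε)⌋,
          fourierHat f ((n : ℝ) / N) *
            ∑ x₁ ∈ Finset.Icc 1 N, ∑ x₂ ∈ (Finset.Icc 1 N).erase x₁,
              e ((n : ℝ) * ((x₁ : ℝ) ^ α - (x₂ : ℝ) ^ α)))‖ ≤ C * (N : ℝ) ^ (-t) := by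
  classical
  obtain ⟨j, hj⟩ : ∃ j : ℕ, t + 2 ≤ ε * j := by
    refine ⟨⌈(t + 2) / ε⌉₊, ?_⟩
    have h1 : (t + 2) / ε ≤ (⌈(t + 2) / ε⌉₊ : ℝ) := Nat.le_ceil _
    calc t + 2 = ε * ((t + 2) / ε) := by field_simp
      _ ≤ ε * ⌈(t + 2) / ε⌉₊ := by gcongr
  set k : ℕ := j + 2 with hk
  obtain ⟨C, hCpos, hC⟩ := Trunc.hat_decay hf hsupp k
  obtain ⟨C₂, hC₂pos, hC₂⟩ := Trunc.hat_decay hf hsupp 2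
  set T : ℝ := ∑' n : ℤ, ((n : ℝ) ^ 2)⁻¹ with hT
  have hTnn : 0 ≤ T := tsum_nonneg (fun n => by positivity)
  refine ⟨C * (T + 1), mul_pos hCpos (by linarith), fun α N hN => ?_⟩
  have hN0 : (0 : ℝ) < (N : ℝ) := Nat.cast_pos.mpr hN
  have hN1 : (1 : ℝ) ≤ (N : ℝ) := by exact_mod_cast hN
  set M : ℤ := ⌊(N : ℝ) ^ (1 + ε)⌋ with hM
  set G : ℤ → ℂ := fun n => fourierHat f ((n : ℝ) / N) *
      ∑ x₁ ∈ Finset.Icc 1 N, ∑ x₂ ∈ (Finset.Icc 1 N).erase x₁,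
        e ((n : ℝ) * ((x₁ : ℝ) ^ α - (x₂ : ℝ) ^ α)) with hG
  -- summability of the basic series
  have hsummand : ∀ y : ℝ,
      Summable (fun n : ℤ => fourierHat f ((n : ℝ) / N) * e ((n : ℝ) * y)) := by
    intro y
    apply Summable.of_norm_bounded_eventually (g := fun n : ℤ => (C₂ * (N : ℝ) ^ 2) * ((n : ℝ) ^ 2)⁻¹)
      (Trunc.summable_inv_sq.mul_left _)
    filter_upwards [eventually_cofinite_ne (0 : ℤ)] with n hn
    have hn0 : ((n : ℝ)) ≠ 0 := Int.cast_ne_zero.mpr hn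
    have hn2 : (0 : ℝ) < (n : ℝ) ^ 2 := by positivity
    rw [norm_mul, Trunc.abs_e, mul_one]
    have h2 := (hC₂ ((n : ℝ) / N)).2
    have habs : |((n : ℝ) / N)| ^ 2 = (n : ℝ) ^ 2 / (N : ℝ) ^ 2 := by
      rw [sq_abs, div_pow]
    rw [habs] at h2
    rw [mul_comm (C₂ * (N : ℝ) ^ 2), ← div_eq_inv_mul, le_div_iff₀ hn2]
    have h3 := mul_le_mul_of_nonneg_right h2 (pow_pos hN0 2).le
    field_simp at h3
    nlinarith [h3]
  -- bound on the exponential sums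
  have hS : ∀ n : ℤ, ‖∑ x₁ ∈ Finset.Icc 1 N, ∑ x₂ ∈ (Finset.Icc 1 N).erase x₁,
      e ((n : ℝ) * ((x₁ : ℝ) ^ α - (x₂ : ℝ) ^ α))‖ ≤ (N : ℝ) ^ 2 := by
    intro n
    have hcard : ∀ x₁ : ℕ, (((Finset.Icc 1 N).erase x₁).card : ℝ) ≤ (N : ℝ) := by
      intro x₁
      have := Finset.card_le_card (Finset.erase_subset x₁ (Finset.Icc 1 N))
      have h2 : (Finset.Icc 1 N).card = N := by rw [Nat.card_Icc]; omega
      exact_mod_cast this.trans_eq h2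
    calc ‖∑ x₁ ∈ Finset.Icc 1 N, ∑ x₂ ∈ (Finset.Icc 1 N).erase x₁,
        e ((n : ℝ) * ((x₁ : ℝ) ^ α - (x₂ : ℝ) ^ α))‖
        ≤ ∑ x₁ ∈ Finset.Icc 1 N, ‖∑ x₂ ∈ (Finset.Icc 1 N).erase x₁,
            e ((n : ℝ) * ((x₁ : ℝ) ^ α - (x₂ : ℝ) ^ α))‖ := norm_sum_le _ _
      _ ≤ ∑ x₁ ∈ Finset.Icc 1 N, (N : ℝ) := by
          apply Finset.sum_le_sum
          intro x₁ _
          calc ‖∑ x₂ ∈ (Finset.Icc 1 N).erase x₁,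
              e ((n : ℝ) * ((x₁ : ℝ) ^ α - (x₂ : ℝ) ^ α))‖
              ≤ ∑ x₂ ∈ (Finset.Icc 1 N).erase x₁,
                ‖e ((n : ℝ) * ((x₁ : ℝ) ^ α - (x₂ : ℝ) ^ α))‖ := norm_sum_le _ _
            _ = (((Finset.Icc 1 N).erase x₁).card : ℝ) := by
                simp only [Trunc.abs_e, Finset.sum_const, nsmul_eq_mul, mul_one]
            _ ≤ (N : ℝ) := hcard x₁
      _ = (N : ℝ) * (N : ℝ) := by
          rw [Finset.sum_const, nsmul_eq_mul, Nat.card_Icc]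
          congr 1
      _ = (N : ℝ) ^ 2 := by ring
  -- norm-summability of G
  have hGnorm : Summable (fun n : ℤ => ‖G n‖) := by
    apply Summable.of_norm_bounded_eventually
      (g := fun n : ℤ => ((N : ℝ) ^ 2 * (C₂ * (N : ℝ) ^ 2)) * ((n : ℝ) ^ 2)⁻¹)
      (Trunc.summable_inv_sq.mul_left _)
    filter_upwards [eventually_cofinite_ne (0 : ℤ)] with n hn
    have hn0 : ((n : ℝ)) ≠ 0 := Int.cast_ne_zero.mpr hn
    have hn2 : (0 : ℝ) < (n : ℝ) ^ 2 := by positivity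
    rw [norm_norm, hG]
    have hfb : ‖fourierHat f ((n : ℝ) / N)‖ ≤ (C₂ * (N : ℝ) ^ 2) * ((n : ℝ) ^ 2)⁻¹ := by
      have h2 := (hC₂ ((n : ℝ) / N)).2
      have habs : |((n : ℝ) / N)| ^ 2 = (n : ℝ) ^ 2 / (N : ℝ) ^ 2 := by
        rw [sq_abs, div_pow]
      rw [habs] at h2
      rw [mul_comm (C₂ * (N : ℝ) ^ 2), ← div_eq_inv_mul, le_div_iff₀ hn2]
      have h3 := mul_le_mul_of_nonneg_right h2 (pow_pos hN0 2).le
      field_simp at h3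
      nlinarith [h3]
    calc ‖fourierHat f ((n : ℝ) / N) * ∑ x₁ ∈ Finset.Icc 1 N,
        ∑ x₂ ∈ (Finset.Icc 1 N).erase x₁, e ((n : ℝ) * ((x₁ : ℝ) ^ α - (x₂ : ℝ) ^ α))‖
        = ‖fourierHat f ((n : ℝ) / N)‖ * ‖∑ x₁ ∈ Finset.Icc 1 N,
          ∑ x₂ ∈ (Finset.Icc 1 N).erase x₁,
            e ((n : ℝ) * ((x₁ : ℝ) ^ α - (x₂ : ℝ) ^ α))‖ := norm_mul _ _
      _ ≤ ((C₂ * (N : ℝ) ^ 2) * ((n : ℝ) ^ 2)⁻¹) * (N : ℝ) ^ 2 :=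
          mul_le_mul hfb (hS n) (norm_nonneg _) (by positivity)
      _ = ((N : ℝ) ^ 2 * (C₂ * (N : ℝ) ^ 2)) * ((n : ℝ) ^ 2)⁻¹ := by ring
  have hGsum : Summable G := hGnorm.of_norm
  -- the main identity via Poisson summation
  have hR : (R2 f α N : ℂ) = ((N : ℂ) ^ 2)⁻¹ * ∑' n : ℤ, G n := by
    rw [R2]
    push_cast [Complex.ofReal_tsum]
    have hpois : ∀ x₁ x₂ : ℕ,
        ∑' m : ℤ, ((f ((N : ℝ) * ((x₁ : ℝ) ^ α - (x₂ : ℝ) ^ α - (m : ℝ))) : ℂ)) =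
          ((N : ℂ))⁻¹ * ∑' n : ℤ, fourierHat f ((n : ℝ) / N) *
            e ((n : ℝ) * ((x₁ : ℝ) ^ α - (x₂ : ℝ) ^ α)) := by
      intro x₁ x₂
      have := Trunc.poisson hf hsupp ((x₁ : ℝ) ^ α - (x₂ : ℝ) ^ α) N hN
      rw [this]
      push_cast
      ring
    calc ((N : ℂ))⁻¹ * ∑ x₁ ∈ Finset.Icc 1 N, ∑ x₂ ∈ (Finset.Icc 1 N).erase x₁,
        ∑' m : ℤ, ((f ((N : ℝ) * ((x₁ : ℝ) ^ α - (x₂ : ℝ) ^ α - (m : ℝ))) : ℂ))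
        = ((N : ℂ))⁻¹ * ∑ x₁ ∈ Finset.Icc 1 N, ∑ x₂ ∈ (Finset.Icc 1 N).erase x₁,
          (((N : ℂ))⁻¹ * ∑' n : ℤ, fourierHat f ((n : ℝ) / N) *
            e ((n : ℝ) * ((x₁ : ℝ) ^ α - (x₂ : ℝ) ^ α))) := by
          simp_rw [hpois]
      _ = ((N : ℂ))⁻¹ * (((N : ℂ))⁻¹ * ∑ x₁ ∈ Finset.Icc 1 N,
          ∑ x₂ ∈ (Finset.Icc 1 N).erase x₁, ∑' n : ℤ, fourierHat f ((n : ℝ) / N) *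
            e ((n : ℝ) * ((x₁ : ℝ) ^ α - (x₂ : ℝ) ^ α))) := by
          simp_rw [← Finset.mul_sum]
      _ = ((N : ℂ) ^ 2)⁻¹ * ∑ x₁ ∈ Finset.Icc 1 N,
          ∑ x₂ ∈ (Finset.Icc 1 N).erase x₁, ∑' n : ℤ, fourierHat f ((n : ℝ) / N) *
            e ((n : ℝ) * ((x₁ : ℝ) ^ α - (x₂ : ℝ) ^ α)) := by
          rw [sq, mul_inv, mul_assoc]
      _ = ((N : ℂ) ^ 2)⁻¹ * ∑' n : ℤ, G n := by
          congr 1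
          calc ∑ x₁ ∈ Finset.Icc 1 N, ∑ x₂ ∈ (Finset.Icc 1 N).erase x₁,
              ∑' n : ℤ, fourierHat f ((n : ℝ) / N) *
                e ((n : ℝ) * ((x₁ : ℝ) ^ α - (x₂ : ℝ) ^ α))
              = ∑ x₁ ∈ Finset.Icc 1 N, ∑' n : ℤ, ∑ x₂ ∈ (Finset.Icc 1 N).erase x₁,
                fourierHat f ((n : ℝ) / N) *
                  e ((n : ℝ) * ((x₁ : ℝ) ^ α - (x₂ : ℝ) ^ α)) :=
                Finset.sum_congr rfl (fun x₁ _ => (Summable.tsum_finsetSum (fun x₂ _ => hsummand _)).symm)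
            _ = ∑' n : ℤ, ∑ x₁ ∈ Finset.Icc 1 N, ∑ x₂ ∈ (Finset.Icc 1 N).erase x₁,
                fourierHat f ((n : ℝ) / N) *
                  e ((n : ℝ) * ((x₁ : ℝ) ^ α - (x₂ : ℝ) ^ α)) :=
                (Summable.tsum_finsetSum (fun x₁ _ => summable_sum (fun x₂ _ => hsummand _))).symm
            _ = ∑' n : ℤ, G n := by
                simp_rw [hG, Finset.mul_sum]
  -- per-n bound in the tail
  have hkey : ∀ n : ℤ, (N : ℝ) ^ (1 + ε) ≤ |(n : ℝ)| →
      ‖G n‖ ≤ (C * ((N : ℝ) ^ 2 * (N : ℝ) ^ (-t))) * ((n : ℝ) ^ 2)⁻¹ := by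
    intro n hn
    set P : ℝ := |(n : ℝ)| with hP
    have hNε : (1 : ℝ) ≤ (N : ℝ) ^ (1 + ε) := Real.one_le_rpow hN1 (by linarith)
    have hPpos : (0 : ℝ) < P := lt_of_lt_of_le (by linarith) hn
    have hn2 : (0 : ℝ) < (n : ℝ) ^ 2 := by rw [← sq_abs]; exact pow_pos hPpos 2
    have hPk : (0 : ℝ) < P ^ k := pow_pos hPpos k
    have hNk : (0 : ℝ) < (N : ℝ) ^ k := pow_pos hN0 k
    -- the crucial exponent inequality
    have h1 : (N : ℝ) ^ ((t + k : ℝ)) ≤ P ^ j := by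
      have ha : (N : ℝ) ^ ((t + k : ℝ)) ≤ (N : ℝ) ^ ((1 + ε) * (j : ℝ)) := by
        apply Real.rpow_le_rpow_of_exponent_le hN1
        rw [hk]
        push_cast
        nlinarith [hj]
      apply ha.trans
      calc (N : ℝ) ^ ((1 + ε) * (j : ℝ)) = ((N : ℝ) ^ (1 + ε)) ^ j := by
            rw [Real.rpow_mul hN0.le, Real.rpow_natCast]
        _ ≤ P ^ j := pow_le_pow_left₀ (Real.rpow_nonneg hN0.le _) hn j
    have h2 : (N : ℝ) ^ (t : ℝ) * (n : ℝ) ^ 2 * (N : ℝ) ^ k ≤ P ^ k := by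
      have hsplit : P ^ k = P ^ j * (n : ℝ) ^ 2 := by
        rw [hk, pow_add, sq_abs]
      rw [hsplit]
      have hNtk : (N : ℝ) ^ (t : ℝ) * (N : ℝ) ^ k = (N : ℝ) ^ ((t + k : ℝ)) := by
        rw [← Real.rpow_natCast (N : ℝ) k, ← Real.rpow_add hN0]
      calc (N : ℝ) ^ (t : ℝ) * (n : ℝ) ^ 2 * (N : ℝ) ^ k
          = ((N : ℝ) ^ (t : ℝ) * (N : ℝ) ^ k) * (n : ℝ) ^ 2 := by ring
        _ = (N : ℝ) ^ ((t + k : ℝ)) * (n : ℝ) ^ 2 := by rw [hNtk]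
        _ ≤ P ^ j * (n : ℝ) ^ 2 := mul_le_mul_of_nonneg_right h1 (sq_nonneg _)
    have h5 : (n : ℝ) ^ 2 * (N : ℝ) ^ k ≤ (N : ℝ) ^ (-t) * P ^ k := by
      have hcancel : (N : ℝ) ^ (-t) * (N : ℝ) ^ (t : ℝ) = 1 := by
        rw [← Real.rpow_add hN0]; norm_num
      have := mul_le_mul_of_nonneg_left h2 (Real.rpow_pos_of_pos hN0 (-t)).le
      calc (n : ℝ) ^ 2 * (N : ℝ) ^ k
          = ((N : ℝ) ^ (-t) * (N : ℝ) ^ (t : ℝ)) * ((n : ℝ) ^ 2 * (N : ℝ) ^ k) := by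
            rw [hcancel, one_mul]
        _ = (N : ℝ) ^ (-t) * ((N : ℝ) ^ (t : ℝ) * (n : ℝ) ^ 2 * (N : ℝ) ^ k) := by ring
        _ ≤ (N : ℝ) ^ (-t) * P ^ k := this
    -- bound on the Fourier transform
    have hfb : ‖fourierHat f ((n : ℝ) / N)‖ ≤ (C * (N : ℝ) ^ (-t)) * ((n : ℝ) ^ 2)⁻¹ := by
      have hdec := (hC ((n : ℝ) / N)).2
      have habs : |((n : ℝ) / N)| ^ k = P ^ k / (N : ℝ) ^ k := by
        rw [abs_div, abs_of_pos hN0, div_pow]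
      rw [habs] at hdec
      have hfb1 : ‖fourierHat f ((n : ℝ) / N)‖ ≤ C * (N : ℝ) ^ k / P ^ k := by
        rw [le_div_iff₀ hPk]
        have h4 := mul_le_mul_of_nonneg_right hdec hNk.le
        rw [div_mul_eq_mul_div, div_mul_eq_mul_div, mul_div_assoc,
          div_self hNk.ne', mul_one] at h4
        nlinarith [h4]
      apply hfb1.trans
      rw [← div_eq_mul_inv, div_le_div_iff₀ hPk hn2]
      nlinarith [mul_le_mul_of_nonneg_left h5 hCpos.le]
    rw [hG]
    calc ‖fourierHat f ((n : ℝ) / N) * ∑ x₁ ∈ Finset.Icc 1 N,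
        ∑ x₂ ∈ (Finset.Icc 1 N).erase x₁, e ((n : ℝ) * ((x₁ : ℝ) ^ α - (x₂ : ℝ) ^ α))‖
        = ‖fourierHat f ((n : ℝ) / N)‖ * ‖∑ x₁ ∈ Finset.Icc 1 N,
          ∑ x₂ ∈ (Finset.Icc 1 N).erase x₁,
            e ((n : ℝ) * ((x₁ : ℝ) ^ α - (x₂ : ℝ) ^ α))‖ := norm_mul _ _
      _ ≤ ((C * (N : ℝ) ^ (-t)) * ((n : ℝ) ^ 2)⁻¹) * (N : ℝ) ^ 2 :=
          mul_le_mul hfb (hS n) (norm_nonneg _) (by positivity)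
      _ = (C * ((N : ℝ) ^ 2 * (N : ℝ) ^ (-t))) * ((n : ℝ) ^ 2)⁻¹ := by ring
  -- assembling everything
  have hMreal : (N : ℝ) ^ (1 + ε) < (M : ℝ) + 1 := Int.lt_floor_add_one _
  have hcompl : ∀ n : ℤ, n ∉ Finset.Icc (-M) M → (N : ℝ) ^ (1 + ε) ≤ |(n : ℝ)| := by
    intro n hn
    rw [Finset.mem_Icc] at hn
    push_neg at hn
    rcases lt_or_ge n (-M) with h | h
    · have h1 : (M : ℝ) + 1 ≤ ((-n : ℤ) : ℝ) := by exact_mod_cast by omega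
      have h2 : ((-n : ℤ) : ℝ) = -(n : ℝ) := by push_cast; ring
      calc (N : ℝ) ^ (1 + ε) ≤ (M : ℝ) + 1 := hMreal.le
        _ ≤ -(n : ℝ) := h2 ▸ h1
        _ ≤ |(n : ℝ)| := neg_le_abs _
    · have h3 := hn h
      have h1 : (M : ℝ) + 1 ≤ (n : ℝ) := by exact_mod_cast by omega
      calc (N : ℝ) ^ (1 + ε) ≤ (M : ℝ) + 1 := hMreal.le
        _ ≤ (n : ℝ) := h1
        _ ≤ |(n : ℝ)| := le_abs_self _
  have hfold : (∑ n ∈ Finset.Icc (-M) M, fourierHat f ((n : ℝ) / N) *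
      ∑ x₁ ∈ Finset.Icc 1 N, ∑ x₂ ∈ (Finset.Icc 1 N).erase x₁,
        e ((n : ℝ) * ((x₁ : ℝ) ^ α - (x₂ : ℝ) ^ α)))
      = ∑ n ∈ Finset.Icc (-M) M, G n := by simp only [hG]
  have h := Summable.sum_add_tsum_compl (s := Finset.Icc (-M) M) hGsum
  have hcb := eq_sub_of_add_eq' h
  rw [hfold, hR, ← mul_sub, ← hcb]
  have hNt : (0 : ℝ) < (N : ℝ) ^ (-t) := Real.rpow_pos_of_pos hN0 _
  have hkey' : ∀ n ∈ ((Finset.Icc (-M) M : Finset ℤ) : Set ℤ)ᶜ,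
      ‖G n‖ ≤ (C * ((N : ℝ) ^ 2 * (N : ℝ) ^ (-t))) * ((n : ℝ) ^ 2)⁻¹ := by
    intro n hn
    exact hkey n (hcompl n (by simpa using hn))
  have htail := Trunc.tail_bound G (C * ((N : ℝ) ^ 2 * (N : ℝ) ^ (-t)))
    ((Finset.Icc (-M) M : Finset ℤ) : Set ℤ)ᶜ hGnorm hkey' (by positivity)
  rw [← hT] at htail
  rw [norm_mul, norm_inv, norm_pow, Complex.norm_natCast]
  refine le_trans (mul_le_mul_of_nonneg_left htail (by positivity)) ?_
  have heq : ((N : ℝ) ^ 2)⁻¹ * ((C * ((N : ℝ) ^ 2 * (N : ℝ) ^ (-t))) * T)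
      = C * T * (N : ℝ) ^ (-t) * ((N : ℝ) ^ 2 * ((N : ℝ) ^ 2)⁻¹) := by ring
  rw [heq, mul_inv_cancel₀ (by positivity), mul_one]
  nlinarith [hNt, hCpos, hTnn]
end

section
/- Let d ≥ 2 be an integer and let 2 ≤ x_1 < x_2 < ⋯ < x_d ≤ N be real numbers; set L_i = log x_i for 1 ≤ i ≤ d, and let V_d be the d×d Vandermonde-type matrix whose (i,j) entry is L_j^i. Let w ∈ ℝ^d and y = V_d w. Then for every ε > 0 there exists a constant C_{d,ε} > 0 depending only on d and ε such that ‖y‖_∞ ≥ C_{d,ε} ‖w‖_∞ x_d^{1−d} N^{−ε} ∏_{m=1}^{d−1} h_m, where h_m = x_{m+1} − x_m and ‖·‖_∞ denotes the maximum norm. -/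
open MeasureTheory Filter Finset Polynomial

set_option maxHeartbeats 1000000


lemma coeff_abs_sum_le {ι : Type*} (a : ι → ℝ) (s : Finset ι) :
    ∑ i ∈ Finset.range (s.card + 1),
      |(∏ m ∈ s, (X - C (a m))).coeff i| ≤ ∏ m ∈ s, (1 + |a m|) := by
  classical
  induction s using Finset.induction with
  | empty => simp
  | @insert r s' hr ih =>
    rw [Finset.prod_insert hr, Finset.prod_insert hr, Finset.card_insert_of_notMem hr,
      mul_comm]
    set q : ℝ[X] := ∏ m ∈ s', (X - C (a m)) with hq
    set n := s'.card with hn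
    have hmon : q.Monic := monic_prod_of_monic _ _ (fun i _ => monic_X_sub_C _)
    have hdeg : q.natDegree = n := by
      rw [hq, natDegree_prod_of_monic _ _ (fun i _ => monic_X_sub_C _)]
      simp [hn]
    have hqtop : q.coeff (n + 1) = 0 :=
      coeff_eq_zero_of_natDegree_lt (by omega)
    set S := ∑ i ∈ Finset.range (n + 1), |q.coeff i| with hS
    have hS0 : ∑ i ∈ Finset.range n, |q.coeff (i+1)| = S - |q.coeff 0| := by
      rw [hS, Finset.sum_range_succ' (fun i => |q.coeff i|) n]; ring
    have key : ∑ i ∈ Finset.range (n + 1 + 1), |(q * (X - C (a r))).coeff i|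
        ≤ (1 + |a r|) * S := by
      rw [Finset.sum_range_succ']
      have h0 : (q * (X - C (a r))).coeff 0 = q.coeff 0 * (0 - a r) := by
        rw [mul_coeff_zero]; simp
      have hstep : ∀ i ∈ Finset.range (n+1),
          |(q * (X - C (a r))).coeff (i+1)| ≤ |q.coeff i| + |q.coeff (i+1)| * |a r| := by
        intro i _
        rw [coeff_mul_X_sub_C]
        calc |q.coeff i - q.coeff (i+1) * a r| ≤ |q.coeff i| + |q.coeff (i+1) * a r| :=
              abs_sub _ _
          _ = |q.coeff i| + |q.coeff (i+1)| * |a r| := by rw [abs_mul]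
      have h1 : ∑ i ∈ Finset.range (n+1), |(q * (X - C (a r))).coeff (i+1)|
          ≤ S + (S - |q.coeff 0| + 0) * |a r| := by
        calc ∑ i ∈ Finset.range (n+1), |(q * (X - C (a r))).coeff (i+1)|
            ≤ ∑ i ∈ Finset.range (n+1), (|q.coeff i| + |q.coeff (i+1)| * |a r|) :=
              Finset.sum_le_sum hstep
          _ = S + (∑ i ∈ Finset.range (n+1), |q.coeff (i+1)|) * |a r| := by
              rw [Finset.sum_add_distrib, ← Finset.sum_mul]
          _ = S + (S - |q.coeff 0| + 0) * |a r| := by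
              rw [Finset.sum_range_succ (fun i => |q.coeff (i+1)|) n, hS0, hqtop, abs_zero]
      have h2 : |(q * (X - C (a r))).coeff 0| = |q.coeff 0| * |a r| := by
        rw [h0, abs_mul]; simp
      rw [h2]
      nlinarith [abs_nonneg (a r), abs_nonneg (q.coeff 0)]
    calc ∑ i ∈ Finset.range (n + 1 + 1), |(q * (X - C (a r))).coeff i|
        ≤ (1 + |a r|) * S := key
      _ ≤ (1 + |a r|) * ∏ m ∈ s', (1 + |a m|) := by
          apply mul_le_mul_of_nonneg_left ih; positivity

lemma log_gap {b a X : ℝ} (hb : 0 < b) (hba : b ≤ a) (haX : a ≤ X) :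
    (a - b) / X ≤ Real.log a - Real.log b := by
  have ha : 0 < a := lt_of_lt_of_le hb hba
  have hX : 0 < X := lt_of_lt_of_le ha haX
  have h1 : Real.log (b / a) ≤ b / a - 1 := Real.log_le_sub_one_of_pos (by positivity)
  rw [Real.log_div (ne_of_gt hb) (ne_of_gt ha)] at h1
  have h2 : 1 - b / a ≤ Real.log a - Real.log b := by linarith
  have h3 : (a - b) / X ≤ (a - b) / a := by
    apply div_le_div_of_nonneg_left ?_ ha haX
    linarith
  have h4 : (a - b) / a = 1 - b / a := by field_simp
  linarith

/-- Lower bound for `‖V_d w‖_∞` where `V_d` is the Vandermonde-type matrix with entries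
`(log x_j)^i`, `1 ≤ i, j ≤ d`. The norm on `Fin d → ℝ` is the sup norm. -/
theorem vandermonde_lower_bound (d : ℕ) (hd : 2 ≤ d) (ε : ℝ) (hε : 0 < ε) :
    ∃ C > (0 : ℝ), ∀ (N : ℝ) (x w : Fin d → ℝ),
      2 ≤ x ⟨0, by omega⟩ → StrictMono x → x ⟨d - 1, by omega⟩ ≤ N →
      C * ‖w‖ * (x ⟨d - 1, by omega⟩) ^ ((1 : ℝ) - d) * N ^ (-ε) *
          (∏ m : Fin (d - 1),
            (x ⟨m.1 + 1, by have := m.2; omega⟩ - x ⟨m.1, by have := m.2; omega⟩)) ≤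
        ‖Matrix.mulVec (Matrix.of fun i j : Fin d => (Real.log (x j)) ^ ((i : ℕ) + 1)) w‖ := by
  classical
  set n := d - 1 with hn
  have hn1 : 1 ≤ n := by omega
  have hnd : n + 1 = d := by omega
  have hnR : (0:ℝ) < (n:ℝ) := by exact_mod_cast Nat.pos_of_ne_zero (by omega)
  set δ0 : ℝ := ε / n with hδ0def
  have hδ0 : 0 < δ0 := div_pos hε hnR
  set K : ℝ := (1 + 1/δ0) ^ n with hKdef
  have hK : 0 < K := by positivity
  have hlog2 : 0 < Real.log 2 := Real.log_pos (by norm_num)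
  refine ⟨Real.log 2 / K, div_pos hlog2 hK, ?_⟩
  intro N x w hx2 hmono hxN
  set L : Fin d → ℝ := fun m => Real.log (x m) with hLdef
  set y := Matrix.mulVec (Matrix.of fun i j : Fin d => (Real.log (x j)) ^ ((i : ℕ) + 1)) w
    with hydef
  set Xd : ℝ := x ⟨d - 1, by omega⟩ with hXddef
  -- basic facts
  have hxm2 : ∀ m : Fin d, 2 ≤ x m := by
    intro m
    exact le_trans hx2 (hmono.monotone (by simp [Fin.le_def]))
  have hxmX : ∀ m : Fin d, x m ≤ Xd := by
    intro m
    have := m.2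
    exact hmono.monotone (by simp [Fin.le_def]; omega)
  have hX2 : 2 ≤ Xd := hxm2 _
  have hN2 : 2 ≤ N := le_trans hX2 hxN
  have hXpos : (0:ℝ) < Xd := by linarith
  have hLlb : ∀ m : Fin d, Real.log 2 ≤ L m := fun m =>
    Real.log_le_log (by norm_num) (hxm2 m)
  have hLub : ∀ m : Fin d, L m ≤ Real.log N := fun m =>
    Real.log_le_log (by linarith [hxm2 m]) (le_trans (hxmX m) hxN)
  have hLpos : ∀ m : Fin d, 0 < L m := fun m => lt_of_lt_of_le hlog2 (hLlb m)
  have hlogN : 0 < Real.log N := Real.log_pos (by linarith)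
  set A : ℝ := ∏ m : Fin (d - 1),
      (x ⟨m.1 + 1, by have := m.2; omega⟩ - x ⟨m.1, by have := m.2; omega⟩) with hAdef
  have hApos : 0 < A := by
    apply Finset.prod_pos
    intro m _
    have : (⟨m.1, by have := m.2; omega⟩ : Fin d) < ⟨m.1 + 1, by have := m.2; omega⟩ := by
      simp [Fin.lt_def]
    linarith [hmono this]
  set B : ℝ := (1 + Real.log N) ^ n with hBdef
  have hB : 0 < B := by positivity
  -- the Lagrange polynomials
  set p : Fin d → ℝ[X] := fun j => ∏ m ∈ Finset.univ.erase j, (X - C (L m)) with hpdef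
  have hcard : ∀ j : Fin d, (Finset.univ.erase j).card = n := by
    intro j
    rw [Finset.card_erase_of_mem (Finset.mem_univ j), Finset.card_univ, Fintype.card_fin]
  have hdegp : ∀ j, (p j).natDegree = n := by
    intro j
    rw [hpdef, natDegree_prod_of_monic _ _ (fun i _ => monic_X_sub_C _)]
    simp [hcard j]
  -- interpolation identity
  have hid : ∀ j : Fin d, ∑ i : Fin d, (p j).coeff i.1 * y i
      = w j * (L j * ∏ m ∈ Finset.univ.erase j, (L j - L m)) := by
    intro j
    have heval : ∀ k : Fin d, (p j).eval (L k) = ∏ m ∈ Finset.univ.erase j, (L k - L m) := by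
      intro k
      rw [hpdef, eval_prod]
      simp
    have hy' : ∀ i : Fin d, y i = ∑ k : Fin d, (L k) ^ (i.1 + 1) * w k := by
      intro i
      simp [hydef, Matrix.mulVec, dotProduct, hLdef]
    calc ∑ i : Fin d, (p j).coeff i.1 * y i
        = ∑ i : Fin d, ∑ k : Fin d, (p j).coeff i.1 * ((L k) ^ (i.1 + 1) * w k) := by
          simp_rw [hy', Finset.mul_sum]
      _ = ∑ k : Fin d, (w k * L k) * ∑ i : Fin d, (p j).coeff i.1 * (L k) ^ i.1 := by
          rw [Finset.sum_comm]
          congr 1; ext k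
          rw [Finset.mul_sum]
          congr 1; ext i
          ring
      _ = ∑ k : Fin d, (w k * L k) * (p j).eval (L k) := by
          congr 1; ext k
          congr 1
          rw [Polynomial.eval_eq_sum_range' (n := d) (by rw [hdegp j]; omega) (L k),
            ← Fin.sum_univ_eq_sum_range (fun i => (p j).coeff i * (L k) ^ i) d]
      _ = (w j * L j) * (p j).eval (L j) := by
          apply Finset.sum_eq_single
          · intro k _ hkj
            have : (p j).eval (L k) = 0 := by
              rw [heval k]
              exact Finset.prod_eq_zero (Finset.mem_erase.2 ⟨hkj, Finset.mem_univ k⟩)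
                (by ring)
            rw [this, mul_zero]
          · intro h; exact absurd (Finset.mem_univ j) h
      _ = w j * (L j * ∏ m ∈ Finset.univ.erase j, (L j - L m)) := by
          rw [heval j]; ring
  -- coefficient sum bound
  have hcoef : ∀ j : Fin d, ∑ i : Fin d, |(p j).coeff i.1| ≤ B := by
    intro j
    have h1 : ∑ i : Fin d, |(p j).coeff i.1|
        = ∑ i ∈ Finset.range ((Finset.univ.erase j).card + 1), |(p j).coeff i| := by
      rw [hcard j, hnd]
      exact Fin.sum_univ_eq_sum_range (fun i => |(p j).coeff i|) d
    rw [h1]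
    calc ∑ i ∈ Finset.range ((Finset.univ.erase j).card + 1), |(p j).coeff i|
        ≤ ∏ m ∈ Finset.univ.erase j, (1 + |L m|) := coeff_abs_sum_le L _
      _ ≤ ∏ m ∈ Finset.univ.erase j, (1 + Real.log N) := by
          apply Finset.prod_le_prod
          · intro m _; positivity
          · intro m _
            rw [abs_of_pos (hLpos m)]
            linarith [hLub m]
      _ = B := by rw [Finset.prod_const, hcard j]
  -- the index auxiliary function
  set xx : ℕ → ℝ := fun t => x ⟨min t (d-1), by omega⟩ with hxxdef
  have hxx : ∀ (t : ℕ) (h : t < d), xx t = x ⟨t, h⟩ := by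
    intro t h
    simp only [hxxdef]
    congr 1
    exact Fin.ext (by simp; omega)
  -- gap product bound
  have hgap : ∀ j : Fin d, A / Xd ^ n ≤ ∏ m ∈ Finset.univ.erase j, |L j - L m| := by
    intro j
    set δ : Fin d → ℝ := fun k => if k.1 < j.1 then xx (k.1+1) - xx k.1
      else xx k.1 - xx (k.1-1) with hδdef
    have hδ : ∀ k ∈ Finset.univ.erase j, 0 ≤ δ k ∧ δ k / Xd ≤ |L j - L k| := by
      intro k hk
      have hkj : k ≠ j := (Finset.mem_erase.1 hk).1
      rcases lt_or_gt_of_ne hkj with hlt | hgt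
      · have hkj1 : k.1 < j.1 := hlt
        have hk1d : k.1 + 1 < d := by have := j.2; omega
        have hδk : δ k = x ⟨k.1+1, hk1d⟩ - x k := by
          simp only [hδdef, if_pos hkj1, hxx _ hk1d, hxx k.1 k.2]
        have hle1 : x ⟨k.1+1, hk1d⟩ ≤ x j := hmono.monotone (by simp only [Fin.le_def]; omega)
        have hstep : x k < x ⟨k.1+1, hk1d⟩ := hmono (by simp only [Fin.lt_def]; omega)
        have hxkj : x k < x j := hmono hlt
        have hLkj : L k < L j := Real.log_lt_log (by linarith [hxm2 k]) hxkj
        have habs : |L j - L k| = L j - L k := abs_of_pos (by linarith)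
        refine ⟨by rw [hδk]; linarith, ?_⟩
        rw [habs, hδk]
        calc (x ⟨k.1+1, hk1d⟩ - x k) / Xd ≤ (x j - x k) / Xd := by gcongr
          _ ≤ L j - L k := log_gap (by linarith [hxm2 k]) (le_of_lt hxkj) (hxmX j)
      · have hkj1 : j.1 < k.1 := hgt
        have hknlt : ¬ (k.1 < j.1) := by omega
        have hk1d : k.1 - 1 < d := by omega
        have hδk : δ k = x k - x ⟨k.1-1, hk1d⟩ := by
          simp only [hδdef, if_neg hknlt, hxx _ hk1d, hxx k.1 k.2]
        have hle1 : x j ≤ x ⟨k.1-1, hk1d⟩ := hmono.monotone (by simp only [Fin.le_def]; omega)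
        have hstep : x ⟨k.1-1, hk1d⟩ < x k := hmono (by simp only [Fin.lt_def]; omega)
        have hxkj : x j < x k := hmono hgt
        have hLkj : L j < L k := Real.log_lt_log (by linarith [hxm2 j]) hxkj
        have habs : |L j - L k| = L k - L j := by
          rw [abs_sub_comm]; exact abs_of_pos (by linarith)
        refine ⟨by rw [hδk]; linarith, ?_⟩
        rw [habs, hδk]
        calc (x k - x ⟨k.1-1, hk1d⟩) / Xd ≤ (x k - x j) / Xd := by gcongr
          _ ≤ L k - L j := log_gap (by linarith [hxm2 j]) (le_of_lt hxkj) (hxmX k)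
    have hδA : ∏ m ∈ Finset.univ.erase j, δ m = A := by
      rw [hAdef]
      refine Finset.prod_bij' (fun (k : Fin d) (hk : k ∈ Finset.univ.erase j) =>
          (⟨if k.1 < j.1 then k.1 else k.1 - 1, by
            have := k.2; have := j.2; split <;> omega⟩ : Fin (d-1)))
        (fun (m : Fin (d-1)) (hm : m ∈ (Finset.univ : Finset (Fin (d-1)))) =>
          (⟨if m.1 < j.1 then m.1 else m.1 + 1, by have := m.2; split <;> omega⟩ : Fin d))
        (fun a ha => Finset.mem_univ _) ?_ ?_ ?_ ?_
      · intro m hm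
        refine Finset.mem_erase.2 ⟨?_, Finset.mem_univ _⟩
        apply Fin.ne_of_val_ne
        by_cases h : m.1 < j.1 <;> simp [h] <;> omega
      · intro a ha
        have haj : a.1 ≠ j.1 := fun h => (Finset.mem_erase.1 ha).1 (Fin.ext h)
        by_cases h : a.1 < j.1
        · apply Fin.ext; simp [h]
        · have h2 : ¬ (a.1 - 1 < j.1) := by omega
          apply Fin.ext; simp [h, h2]; omega
      · intro m hm
        by_cases h : m.1 < j.1
        · apply Fin.ext; simp [h]
        · have h2 : ¬ (m.1 + 1 < j.1) := by omega
          apply Fin.ext; simp [h, h2]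
      · intro a ha
        have haj : a.1 ≠ j.1 := fun h => (Finset.mem_erase.1 ha).1 (Fin.ext h)
        by_cases h : a.1 < j.1
        · have h1 : δ a = xx (a.1+1) - xx a.1 := by simp only [hδdef, if_pos h]
          rw [h1, hxx (a.1+1) (by have := j.2; omega), hxx a.1 a.2]
          congr 1 <;> exact congrArg x (Fin.ext (by simp [h]))
        · have h1 : δ a = xx a.1 - xx (a.1-1) := by simp only [hδdef, if_neg h]
          rw [h1, hxx a.1 a.2, hxx (a.1-1) (by omega)]
          congr 1 <;> exact congrArg x (Fin.ext (by simp [h] <;> omega))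
    calc A / Xd ^ n = (∏ m ∈ Finset.univ.erase j, δ m) / Xd ^ n := by rw [hδA]
      _ = ∏ m ∈ Finset.univ.erase j, (δ m / Xd) := by
          rw [Finset.prod_div_distrib, Finset.prod_const, hcard j]
      _ ≤ ∏ m ∈ Finset.univ.erase j, |L j - L m| := by
          apply Finset.prod_le_prod
          · intro m hm; exact div_nonneg (hδ m hm).1 (le_of_lt hXpos)
          · intro m hm; exact (hδ m hm).2
  -- per-j bound
  have hbound : ∀ j : Fin d, |w j| * (Real.log 2 * (A / Xd ^ n)) ≤ B * ‖y‖ := by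
    intro j
    have h1 : |w j| * (L j * |∏ m ∈ Finset.univ.erase j, (L j - L m)|)
        = |∑ i : Fin d, (p j).coeff i.1 * y i| := by
      rw [hid j, abs_mul, abs_mul, abs_of_pos (hLpos j)]
    have h2 : |∑ i : Fin d, (p j).coeff i.1 * y i| ≤ B * ‖y‖ := by
      calc |∑ i : Fin d, (p j).coeff i.1 * y i|
          ≤ ∑ i : Fin d, |(p j).coeff i.1 * y i| := Finset.abs_sum_le_sum_abs _ _
        _ ≤ ∑ i : Fin d, |(p j).coeff i.1| * ‖y‖ := by
            apply Finset.sum_le_sum; intro i _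
            rw [abs_mul]
            exact mul_le_mul_of_nonneg_left (by simpa using norm_le_pi_norm y i) (abs_nonneg _)
        _ = (∑ i : Fin d, |(p j).coeff i.1|) * ‖y‖ := by rw [Finset.sum_mul]
        _ ≤ B * ‖y‖ := mul_le_mul_of_nonneg_right (hcoef j) (norm_nonneg _)
    have h3 : A / Xd ^ n ≤ |∏ m ∈ Finset.univ.erase j, (L j - L m)| := by
      rw [Finset.abs_prod]
      exact hgap j
    calc |w j| * (Real.log 2 * (A / Xd ^ n))
        ≤ |w j| * (L j * |∏ m ∈ Finset.univ.erase j, (L j - L m)|) := by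
          apply mul_le_mul_of_nonneg_left ?_ (abs_nonneg _)
          apply mul_le_mul (hLlb j) h3 ?_ (le_of_lt (hLpos j))
          positivity
      _ = |∑ i : Fin d, (p j).coeff i.1 * y i| := h1
      _ ≤ B * ‖y‖ := h2
  -- take sup over j
  have hc : 0 < Real.log 2 * (A / Xd ^ n) := by positivity
  have hwnorm : ‖w‖ * (Real.log 2 * (A / Xd ^ n)) ≤ B * ‖y‖ := by
    rw [← le_div_iff₀ hc]
    rw [pi_norm_le_iff_of_nonneg (div_nonneg (by positivity) (le_of_lt hc))]
    intro i
    rw [Real.norm_eq_abs, le_div_iff₀ hc]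
    exact hbound i
  -- bound B by K * N ^ ε
  have hBK : B ≤ K * N ^ ε := by
    have h1 : Real.log N ≤ N ^ δ0 / δ0 := Real.log_le_rpow_div (by linarith) hδ0
    have h2 : (1:ℝ) ≤ N ^ δ0 := Real.one_le_rpow (by linarith) (le_of_lt hδ0)
    have h3 : 1 + Real.log N ≤ (1 + 1/δ0) * N ^ δ0 := by
      have h4 : N ^ δ0 / δ0 = N ^ δ0 * (1/δ0) := by ring
      have h5 : (1:ℝ) * (1/δ0) ≤ N ^ δ0 * (1/δ0) :=
        mul_le_mul_of_nonneg_right h2 (by positivity)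
      nlinarith
    calc B ≤ ((1 + 1/δ0) * N ^ δ0) ^ n := pow_le_pow_left₀ (by linarith) h3 n
      _ = K * (N ^ δ0) ^ n := by rw [mul_pow]
      _ = K * N ^ ε := by
          rw [← Real.rpow_natCast (N ^ δ0) n, ← Real.rpow_mul (by linarith : (0:ℝ) ≤ N),
            hδ0def, div_mul_cancel₀ _ (ne_of_gt hnR)]
  have hyB : Real.log 2 * (A / Xd ^ n) * ‖w‖ / B ≤ ‖y‖ := by
    rw [div_le_iff₀ hB]
    calc Real.log 2 * (A / Xd ^ n) * ‖w‖ = ‖w‖ * (Real.log 2 * (A / Xd ^ n)) := by ring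
      _ ≤ B * ‖y‖ := hwnorm
      _ = ‖y‖ * B := by ring
  -- rewrite the rpow factors
  have hnRd : ((n:ℕ):ℝ) = (d:ℝ) - 1 := by
    rw [hn, Nat.cast_sub (by omega : 1 ≤ d)]; norm_num
  have hXr : Xd ^ ((1:ℝ) - d) = (Xd ^ n)⁻¹ := by
    have h : ((1:ℝ) - d) = -((n:ℕ):ℝ) := by rw [hnRd]; ring
    rw [h, Real.rpow_neg (le_of_lt hXpos), Real.rpow_natCast]
  have hNr : N ^ (-ε) = (N ^ ε)⁻¹ := Real.rpow_neg (by linarith) ε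
  have hNε : 0 < N ^ ε := Real.rpow_pos_of_pos (by linarith) ε
  rw [hXr, hNr]
  calc Real.log 2 / K * ‖w‖ * (Xd ^ n)⁻¹ * (N ^ ε)⁻¹ * A
      = Real.log 2 * (A / Xd ^ n) * ‖w‖ / (K * N ^ ε) := by
        field_simp
    _ ≤ Real.log 2 * (A / Xd ^ n) * ‖w‖ / B := by
        gcongr
    _ ≤ ‖y‖ := hyB
end

section
/- Let A > 0 and J = [A, A+1]. For every ε > 0 there exists a constant C > 0 depending only on ε and A such that for every nonzero real number n and every integer N ≥ 2, (1/N²) Σ_{1 ≤ x_1 ≠ x_2 ≤ N} | ∫_J e(n(x_1^α − x_2^α)) dα | ≤ C · N^{−min(2,A)+ε} / |n|, where the sum is over ordered pairs of distinct integers x_1, x_2 in [1,N]. -/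
open MeasureTheory Filter Finset

open intervalIntegral


/-- First derivative test (van der Corput type bound). -/
lemma vdc (a b m : ℝ) (hab : a ≤ b) (φ φ' φ'' : ℝ → ℝ)
    (hφ : ∀ t, HasDerivAt φ (φ' t) t)
    (hφ' : ∀ t, HasDerivAt φ' (φ'' t) t)
    (hc'' : Continuous φ'')
    (hm : 0 < m) (hlb : ∀ t ∈ Set.Icc a b, m ≤ φ' t)
    (hsign : ∀ t ∈ Set.Icc a b, 0 ≤ φ'' t) :
    ‖∫ t in a..b, Complex.exp ((φ t : ℂ) * Complex.I)‖ ≤ 3 / m := by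
  have huIcc : Set.uIcc a b = Set.Icc a b := Set.uIcc_of_le hab
  set g : ℝ → ℂ := fun t => Complex.exp ((φ t : ℂ) * Complex.I) with hg_def
  set w : ℝ → ℂ := fun t => -(φ'' t : ℂ) / (φ' t : ℂ) ^ 2 with hw_def
  set v : ℝ → ℂ := fun t => ((φ' t : ℂ))⁻¹ with hv_def
  have hcφ : Continuous φ := continuous_iff_continuousAt.2 fun t => (hφ t).continuousAt
  have hcφ' : Continuous φ' := continuous_iff_continuousAt.2 fun t => (hφ' t).continuousAt
  have hcg : Continuous g := Complex.continuous_exp.comp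
    ((Complex.continuous_ofReal.comp hcφ).mul continuous_const)
  have habs_g : ∀ t, ‖g t‖ = 1 := fun t => Complex.norm_exp_ofReal_mul_I (φ t)
  have hpos : ∀ t ∈ Set.Icc a b, 0 < φ' t := fun t ht => lt_of_lt_of_le hm (hlb t ht)
  have hne : ∀ t ∈ Set.Icc a b, (φ' t : ℂ) ≠ 0 := fun t ht =>
    Complex.ofReal_ne_zero.2 (ne_of_gt (hpos t ht))
  have hg : ∀ t, HasDerivAt g (g t * ((φ' t : ℂ) * Complex.I)) t := fun t =>
    (((hφ t).ofReal_comp).mul_const Complex.I).cexp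
  have hv : ∀ t ∈ Set.Icc a b, HasDerivAt v (w t) t := fun t ht => by
    have h := ((hφ' t).ofReal_comp).inv (hne t ht)
    exact h
  have hG : ∀ t ∈ Set.Icc a b, HasDerivAt (fun t => g t * v t)
      (Complex.I * g t + g t * w t) t := by
    intro t ht
    have h := (hg t).mul (hv t ht)
    refine h.congr_deriv ?_
    have h0 := hne t ht
    simp only [hv_def]
    rw [show g t * (↑(φ' t) * Complex.I) * (↑(φ' t))⁻¹ = Complex.I * g t * (↑(φ' t) * (↑(φ' t))⁻¹)
      by ring, mul_inv_cancel₀ h0, mul_one]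
  have hcw : ContinuousOn w (Set.Icc a b) := by
    apply ContinuousOn.div
    · exact ((Complex.continuous_ofReal.comp hc'').neg).continuousOn
    · exact ((Complex.continuous_ofReal.comp hcφ').pow 2).continuousOn
    · exact fun t ht => pow_ne_zero 2 (hne t ht)
  have hint1 : IntervalIntegrable (fun t => Complex.I * g t) volume a b :=
    (continuous_const.mul hcg).intervalIntegrable _ _
  have hint2 : IntervalIntegrable (fun t => g t * w t) volume a b := by
    apply ContinuousOn.intervalIntegrable
    rw [huIcc]; exact hcg.continuousOn.mul hcw
  have hFTC : (∫ t in a..b, (Complex.I * g t + g t * w t)) = g b * v b - g a * v a := by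
    apply integral_eq_sub_of_hasDerivAt
    · intro t ht; exact hG t (huIcc ▸ ht)
    · exact hint1.add hint2
  have hsplit : (∫ t in a..b, (Complex.I * g t + g t * w t))
      = Complex.I * (∫ t in a..b, g t) + ∫ t in a..b, g t * w t := by
    rw [integral_add hint1 hint2, intervalIntegral.integral_const_mul]
  have hkey : Complex.I * (∫ t in a..b, g t)
      = g b * v b - g a * v a - ∫ t in a..b, g t * w t := by
    rw [← hFTC, hsplit]; ring
  have habsv : ∀ t ∈ Set.Icc a b, ‖g t * v t‖ ≤ 1 / m := by
    intro t ht
    rw [norm_mul, habs_g, one_mul, hv_def, norm_inv, Complex.norm_real, Real.norm_eq_abs,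
      abs_of_pos (hpos t ht), one_div]
    exact inv_anti₀ hm (hlb t ht)
  -- bound on ∫ g w
  have hwnorm : ∀ t, ‖g t * w t‖ = |φ'' t| / (φ' t) ^ 2 := by
    intro t
    rw [norm_mul, habs_g, one_mul, hw_def]
    rw [norm_div, norm_neg, Complex.norm_real, norm_pow, Complex.norm_real]
    rw [Real.norm_eq_abs, Real.norm_eq_abs, sq_abs]
  have huderiv : ∀ t ∈ Set.Icc a b, HasDerivAt (fun t => -(φ' t)⁻¹) (φ'' t / (φ' t) ^ 2) t := by
    intro t ht
    have := ((hφ' t).inv (ne_of_gt (hpos t ht))).neg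
    exact this.congr_deriv (by ring)
  have hintr : IntervalIntegrable (fun t => φ'' t / (φ' t) ^ 2) volume a b := by
    apply ContinuousOn.intervalIntegrable
    rw [huIcc]
    exact hc''.continuousOn.div ((hcφ'.pow 2).continuousOn)
      (fun t ht => pow_ne_zero 2 (ne_of_gt (hpos t ht)))
  have hFTC2 : (∫ t in a..b, φ'' t / (φ' t) ^ 2) = (φ' a)⁻¹ - (φ' b)⁻¹ := by
    rw [integral_eq_sub_of_hasDerivAt (fun t ht => huderiv t (huIcc ▸ ht)) hintr]
    ring
  have habsint : ‖∫ t in a..b, g t * w t‖ ≤ 1 / m := by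
    calc ‖∫ t in a..b, g t * w t‖ ≤ ∫ t in a..b, ‖g t * w t‖ :=
          intervalIntegral.norm_integral_le_integral_norm hab
      _ = ∫ t in a..b, φ'' t / (φ' t) ^ 2 := by
          apply intervalIntegral.integral_congr
          intro t ht
          rw [huIcc] at ht
          show ‖g t * w t‖ = φ'' t / (φ' t) ^ 2
          rw [hwnorm t, abs_of_nonneg (hsign t ht)]
      _ = (φ' a)⁻¹ - (φ' b)⁻¹ := hFTC2
      _ ≤ 1 / m := by
          have h1 : (φ' a)⁻¹ ≤ 1 / m := by
            rw [one_div]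
            exact inv_anti₀ hm (hlb a ⟨le_refl a, hab⟩)
          have h2 : 0 < (φ' b)⁻¹ := inv_pos.2 (hpos b ⟨hab, le_refl b⟩)
          linarith
  have hb : b ∈ Set.Icc a b := ⟨hab, le_refl b⟩
  have ha : a ∈ Set.Icc a b := ⟨le_refl a, hab⟩
  calc ‖∫ t in a..b, g t‖
      = ‖Complex.I * ∫ t in a..b, g t‖ := by
        rw [norm_mul, Complex.norm_I, one_mul]
    _ = ‖g b * v b - g a * v a - ∫ t in a..b, g t * w t‖ := by rw [hkey]
    _ ≤ ‖g b * v b - g a * v a‖ + ‖∫ t in a..b, g t * w t‖ := by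
        exact norm_sub_le _ _
    _ ≤ ‖g b * v b‖ + ‖g a * v a‖
        + ‖∫ t in a..b, g t * w t‖ := by
        have := norm_sub_le (g b * v b) (g a * v a)
        linarith [this]
    _ ≤ 1 / m + 1 / m + 1 / m := by
        have := habsv b hb
        have := habsv a ha
        linarith [habsint]
    _ = 3 / m := by ring



lemma gdiff_lower (α c y x : ℝ) (hα : 0 < α) (hy : 1 ≤ y) (hyx : y < x)
    (hcle : ∀ z ∈ Set.Icc y x, c ≤ z ^ (α - 1)) :
    c * (x - y) ≤ x ^ α * Real.log x - y ^ α * Real.log y := by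
  set f : ℝ → ℝ := fun z => z ^ α * Real.log z with hf
  set f' : ℝ → ℝ := fun z => α * z ^ (α - 1) * Real.log z + z ^ α * z⁻¹ with hf'
  have hder : ∀ z ∈ Set.Icc y x, HasDerivAt f (f' z) z := by
    intro z hz
    have hz0 : (0:ℝ) < z := lt_of_lt_of_le one_pos (hy.trans hz.1)
    exact (Real.hasDerivAt_rpow_const (Or.inl hz0.ne')).mul (Real.hasDerivAt_log hz0.ne')
  obtain ⟨ξ, hξ, heq⟩ := exists_hasDerivAt_eq_slope f f' hyx
    (fun z hz => (hder z hz).continuousAt.continuousWithinAt)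
    (fun z hz => hder z ⟨hz.1.le, hz.2.le⟩)
  have hξIcc : ξ ∈ Set.Icc y x := ⟨hξ.1.le, hξ.2.le⟩
  have hξ0 : (0:ℝ) < ξ := lt_of_lt_of_le one_pos (hy.trans hξIcc.1)
  have hξ1 : (1:ℝ) ≤ ξ := hy.trans hξIcc.1
  have hne : x - y ≠ 0 := ne_of_gt (by linarith)
  have hfx : f x - f y = f' ξ * (x - y) := by
    rw [heq, div_mul_cancel₀ _ hne]
  have hlow : c ≤ f' ξ := by
    have h1 : 0 ≤ α * ξ ^ (α - 1) * Real.log ξ := by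
      apply mul_nonneg (mul_nonneg hα.le (Real.rpow_pos_of_pos hξ0 _).le)
      exact Real.log_nonneg hξ1
    have h2 : ξ ^ α * ξ⁻¹ = ξ ^ (α - 1) := by
      rw [Real.rpow_sub hξ0, Real.rpow_one, div_eq_mul_inv]
    have h3 : c ≤ ξ ^ (α - 1) := hcle ξ hξIcc
    simp only [hf']
    rw [h2]
    linarith
  have hxy : 0 ≤ x - y := by linarith
  calc c * (x - y) ≤ f' ξ * (x - y) := mul_le_mul_of_nonneg_right hlow hxy
    _ = f x - f y := hfx.symm

lemma pair_bound (A : ℝ) (hA : 0 < A) (n : ℝ) (hn : 0 < n) (x y : ℝ)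
    (hy : 1 ≤ y) (hyx : y < x) (c : ℝ) (hc : 0 < c)
    (hcle : ∀ α ∈ Set.Icc A (A+1), ∀ z ∈ Set.Icc y x, c ≤ z ^ (α - 1)) :
    ‖∫ α in Set.Icc A (A+1), e (n * (x ^ α - y ^ α))‖
      ≤ 3 / (2 * Real.pi * n * ((x - y) * c)) := by
  have hy0 : (0:ℝ) < y := lt_of_lt_of_le one_pos hy
  have hx0 : (0:ℝ) < x := hy0.trans hyx
  have hx1 : (1:ℝ) ≤ x := hy.trans hyx.le
  set φ : ℝ → ℝ := fun a => 2 * Real.pi * n * (x ^ a - y ^ a) with hφdef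
  set φ' : ℝ → ℝ := fun a => 2 * Real.pi * n * (x ^ a * Real.log x - y ^ a * Real.log y)
    with hφ'def
  set φ'' : ℝ → ℝ := fun a =>
    2 * Real.pi * n * (x ^ a * Real.log x * Real.log x - y ^ a * Real.log y * Real.log y)
    with hφ''def
  have hX : ∀ (z : ℝ), 0 < z → ∀ a : ℝ, HasDerivAt (fun a : ℝ => z ^ a) (z ^ a * Real.log z) a :=
    fun z hz a => (Real.hasStrictDerivAt_const_rpow hz a).hasDerivAt
  have hdφ : ∀ a, HasDerivAt φ (φ' a) a := by
    intro a
    exact (((hX x hx0 a).sub (hX y hy0 a)).const_mul (2 * Real.pi * n))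
  have hdφ' : ∀ a, HasDerivAt φ' (φ'' a) a := by
    intro a
    exact ((((hX x hx0 a).mul_const (Real.log x)).sub
      ((hX y hy0 a).mul_const (Real.log y))).const_mul (2 * Real.pi * n))
  have hcz : ∀ z : ℝ, 0 < z → Continuous (fun a : ℝ => z ^ a) := fun z hz =>
    continuous_iff_continuousAt.2 fun a => (hX z hz a).continuousAt
  have hcφ'' : Continuous φ'' := by
    simp only [hφ''def]
    exact continuous_const.mul ((((hcz x hx0).mul continuous_const).mul continuous_const).sub
      (((hcz y hy0).mul continuous_const).mul continuous_const))
  have hπn : (0:ℝ) < 2 * Real.pi * n := by positivity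
  set m : ℝ := 2 * Real.pi * n * ((x - y) * c) with hmdef
  have hm : 0 < m := by
    have : (0:ℝ) < x - y := by linarith
    positivity
  have hlb : ∀ a ∈ Set.Icc A (A + 1), m ≤ φ' a := by
    intro a ha
    have ha0 : 0 < a := lt_of_lt_of_le hA ha.1
    have h := gdiff_lower a c y x ha0 hy hyx (hcle a ha)
    have := mul_le_mul_of_nonneg_left h hπn.le
    simp only [hφ'def, hmdef]
    nlinarith
  have hsign : ∀ a ∈ Set.Icc A (A + 1), 0 ≤ φ'' a := by
    intro a ha
    have ha0 : (0:ℝ) ≤ a := (lt_of_lt_of_le hA ha.1).le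
    have l1 : Real.log y ≤ Real.log x := Real.log_le_log hy0 hyx.le
    have l0 : 0 ≤ Real.log y := Real.log_nonneg hy
    have r : y ^ a ≤ x ^ a := Real.rpow_le_rpow hy0.le hyx.le ha0
    have r0 : (0:ℝ) ≤ y ^ a := (Real.rpow_pos_of_pos hy0 a).le
    have rx0 : (0:ℝ) ≤ x ^ a := r0.trans r
    have key : y ^ a * Real.log y * Real.log y ≤ x ^ a * Real.log x * Real.log x := by
      calc y ^ a * Real.log y * Real.log y ≤ x ^ a * Real.log y * Real.log y := by
            apply mul_le_mul_of_nonneg_right (mul_le_mul_of_nonneg_right r l0) l0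
        _ = x ^ a * (Real.log y * Real.log y) := by ring
        _ ≤ x ^ a * (Real.log x * Real.log x) := by
            exact mul_le_mul_of_nonneg_left (mul_le_mul l1 l1 l0 (l0.trans l1)) rx0
        _ = x ^ a * Real.log x * Real.log x := by ring
    simp only [hφ''def]
    nlinarith
  have hptw : ∀ a : ℝ, e (n * (x ^ a - y ^ a)) = Complex.exp ((φ a : ℂ) * Complex.I) := by
    intro a
    simp only [e, hφdef]
    congr 1
    push_cast
    ring
  have hEq : (∫ α in Set.Icc A (A + 1), e (n * (x ^ α - y ^ α)))
      = ∫ t in A..(A + 1), Complex.exp ((φ t : ℂ) * Complex.I) := by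
    rw [intervalIntegral.integral_of_le (by linarith), ← integral_Icc_eq_integral_Ioc]
    simp only [hptw]
  rw [hEq]
  exact vdc A (A + 1) m (by linarith) φ φ' φ'' hdφ hdφ' hcφ'' hm hlb hsign

lemma pair_abs (A : ℝ) (hA : 0 < A) (n : ℝ) (hn : n ≠ 0) (x y : ℝ)
    (hy : 1 ≤ y) (hyx : y < x) :
    ‖∫ α in Set.Icc A (A + 1), e (n * (x ^ α - y ^ α))‖
      ≤ 3 / (2 * Real.pi * |n| * ((x - y) * min (x ^ (A - 1)) (y ^ (A - 1)))) := by
  have hy0 : (0:ℝ) < y := lt_of_lt_of_le one_pos hy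
  have hx0 : (0:ℝ) < x := hy0.trans hyx
  set c : ℝ := min (x ^ (A - 1)) (y ^ (A - 1)) with hcdef
  have hc : 0 < c := lt_min (Real.rpow_pos_of_pos hx0 _) (Real.rpow_pos_of_pos hy0 _)
  have hcle : ∀ α ∈ Set.Icc A (A + 1), ∀ z ∈ Set.Icc y x, c ≤ z ^ (α - 1) := by
    intro α hα z hz
    have hz1 : (1:ℝ) ≤ z := hy.trans hz.1
    have hz0 : (0:ℝ) < z := lt_of_lt_of_le one_pos hz1
    have step1 : z ^ (A - 1) ≤ z ^ (α - 1) :=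
      Real.rpow_le_rpow_of_exponent_le hz1 (by linarith [hα.1])
    rcases le_or_gt 1 A with h1A | hA1
    · have : y ^ (A - 1) ≤ z ^ (A - 1) := Real.rpow_le_rpow hy0.le hz.1 (by linarith)
      exact le_trans (le_trans (min_le_right _ _) this) step1
    · have : x ^ (A - 1) ≤ z ^ (A - 1) :=
        Real.rpow_le_rpow_of_nonpos hz0 hz.2 (by linarith)
      exact le_trans (le_trans (min_le_left _ _) this) step1
  rcases hn.lt_or_gt with hneg | hpos
  · have hconj : ∀ α : ℝ, e (n * (x ^ α - y ^ α))
        = starRingEnd ℂ (e ((-n) * (x ^ α - y ^ α))) := by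
      intro α
      simp only [e, ← Complex.exp_conj]
      congr 1
      simp only [map_mul, Complex.conj_I, Complex.conj_ofReal, map_ofNat]
      push_cast
      ring
    have : (∫ α in Set.Icc A (A + 1), e (n * (x ^ α - y ^ α)))
        = starRingEnd ℂ (∫ α in Set.Icc A (A + 1), e ((-n) * (x ^ α - y ^ α))) := by
      rw [← integral_conj]
      simp only [hconj]
    rw [this, Complex.norm_conj, abs_of_neg hneg]
    exact pair_bound A hA (-n) (by linarith) x y hy hyx c hc hcle
  · rw [abs_of_pos hpos]
    exact pair_bound A hA n hpos x y hy hyx c hc hcle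

lemma exp_helper (A : ℝ) (hA : 0 < A) (N x2 z : ℝ) (h1 : 1 ≤ x2) (hx2z : x2 ≤ z)
    (hzN : z ≤ N) : x2 ≤ N ^ (2 - min 2 A) * z ^ (A - 1) := by
  have hx20 : (0:ℝ) < x2 := lt_of_lt_of_le one_pos h1
  have hz0 : (0:ℝ) < z := lt_of_lt_of_le hx20 hx2z
  have hN0 : (0:ℝ) < N := lt_of_lt_of_le hz0 hzN
  rcases le_or_gt A 1 with hA1 | h1A
  · have hmin : min 2 A = A := min_eq_right (by linarith)
    rw [hmin]
    have e1 : N ^ (A - 1) ≤ z ^ (A - 1) := Real.rpow_le_rpow_of_nonpos hz0 hzN (by linarith)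
    calc x2 ≤ N := by linarith
      _ = N ^ (2 - A) * N ^ (A - 1) := by
          rw [← Real.rpow_add hN0, show (2 - A) + (A - 1) = 1 by ring, Real.rpow_one]
      _ ≤ N ^ (2 - A) * z ^ (A - 1) :=
          mul_le_mul_of_nonneg_left e1 (Real.rpow_nonneg hN0.le _)
  · rcases le_or_gt A 2 with hA2 | h2A
    · have hmin : min 2 A = A := min_eq_right hA2
      rw [hmin]
      have e1 : x2 ^ (A - 1) ≤ z ^ (A - 1) := Real.rpow_le_rpow hx20.le hx2z (by linarith)
      have e2 : x2 ^ (2 - A) ≤ N ^ (2 - A) := Real.rpow_le_rpow hx20.le (by linarith) (by linarith)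
      calc x2 = x2 ^ (2 - A) * x2 ^ (A - 1) := by
            rw [← Real.rpow_add hx20, show (2 - A) + (A - 1) = 1 by ring, Real.rpow_one]
        _ ≤ N ^ (2 - A) * z ^ (A - 1) :=
            mul_le_mul e2 e1 (Real.rpow_pos_of_pos hx20 _).le (Real.rpow_nonneg hN0.le _)
    · have hmin : min 2 A = 2 := min_eq_left h2A.le
      rw [hmin, show (2:ℝ) - 2 = 0 by ring, Real.rpow_zero, one_mul]
      calc x2 ≤ z := hx2z
        _ = z ^ (1:ℝ) := (Real.rpow_one z).symm
        _ ≤ z ^ (A - 1) := Real.rpow_le_rpow_of_exponent_le (h1.trans hx2z) (by linarith)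

lemma pair_nat (A : ℝ) (hA : 0 < A) (n : ℝ) (hn : n ≠ 0) (N x1 x2 : ℕ)
    (h2 : 1 ≤ x2) (hlt : x2 < x1) (hN : x1 ≤ N) :
    ‖∫ α in Set.Icc A (A + 1), e (n * ((x1:ℝ) ^ α - (x2:ℝ) ^ α))‖
      ≤ (N:ℝ) ^ (2 - min 2 A) / (|n| * (((x1:ℝ) - x2) * x2)) := by
  have hy : (1:ℝ) ≤ (x2:ℝ) := by exact_mod_cast h2
  have hyx : (x2:ℝ) < (x1:ℝ) := by exact_mod_cast hlt
  have hNx : (x1:ℝ) ≤ (N:ℝ) := by exact_mod_cast hN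
  have hx20 : (0:ℝ) < x2 := lt_of_lt_of_le one_pos hy
  have hx10 : (0:ℝ) < x1 := hx20.trans hyx
  have h := pair_abs A hA n hn (x1:ℝ) (x2:ℝ) hy hyx
  refine h.trans ?_
  set c : ℝ := min ((x1:ℝ) ^ (A - 1)) ((x2:ℝ) ^ (A - 1)) with hcdef
  have hc : 0 < c := lt_min (Real.rpow_pos_of_pos hx10 _) (Real.rpow_pos_of_pos hx20 _)
  have hd : (0:ℝ) < (x1:ℝ) - x2 := by linarith
  have hnpos : 0 < |n| := abs_pos.2 hn
  have hx2c : (x2:ℝ) ≤ (N:ℝ) ^ (2 - min 2 A) * c := by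
    rcases le_total ((x1:ℝ) ^ (A - 1)) ((x2:ℝ) ^ (A - 1)) with hmin | hmin
    · rw [hcdef, min_eq_left hmin]
      exact exp_helper A hA N (x2:ℝ) (x1:ℝ) hy hyx.le hNx
    · rw [hcdef, min_eq_right hmin]
      exact exp_helper A hA N (x2:ℝ) (x2:ℝ) hy le_rfl (hyx.le.trans hNx)
  have hπ : (3:ℝ) ≤ 2 * Real.pi := by nlinarith [Real.pi_gt_three]
  have hπpos : (0:ℝ) < Real.pi := Real.pi_pos
  rw [div_le_div_iff₀ (by positivity) (by positivity)]
  calc 3 * (|n| * (((x1:ℝ) - x2) * x2))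
      ≤ (2 * Real.pi) * (|n| * (((x1:ℝ) - x2) * ((N:ℝ) ^ (2 - min 2 A) * c))) := by
        apply mul_le_mul hπ ?_ (by positivity) (by linarith)
        exact mul_le_mul_of_nonneg_left (mul_le_mul_of_nonneg_left hx2c hd.le) (abs_nonneg n)
    _ = (N:ℝ) ^ (2 - min 2 A) * (2 * Real.pi * |n| * (((x1:ℝ) - x2) * c)) := by ring

lemma sumL1 (N x1 : ℕ) (hx1 : x1 ≤ N) :
    ∑ x2 ∈ Finset.Ico 1 x1, ((x1:ℝ) - (x2:ℝ))⁻¹ ≤ ∑ d ∈ Finset.Icc 1 N, ((d:ℝ))⁻¹ := by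
  have e1 : ∑ x2 ∈ Finset.Ico 1 x1, ((x1:ℝ) - (x2:ℝ))⁻¹
      = ∑ d ∈ Finset.Ico 1 x1, ((d:ℝ))⁻¹ := by
    apply Finset.sum_nbij' (i := fun x2 => x1 - x2) (j := fun d => x1 - d)
    · intro a ha; rw [Finset.mem_Ico] at *; omega
    · intro a ha; rw [Finset.mem_Ico] at *; omega
    · intro a ha; rw [Finset.mem_Ico] at ha; omega
    · intro a ha; rw [Finset.mem_Ico] at ha; omega
    · intro a ha
      rw [Finset.mem_Ico] at ha
      rw [Nat.cast_sub (by omega)]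
  rw [e1]
  apply Finset.sum_le_sum_of_subset_of_nonneg
  · intro d hd; rw [Finset.mem_Ico] at hd; rw [Finset.mem_Icc]; omega
  · intro i _ _; positivity

lemma sumL2 (N x1 : ℕ) :
    ∑ x2 ∈ Finset.Ioc x1 N, ((x2:ℝ) - (x1:ℝ))⁻¹ ≤ ∑ d ∈ Finset.Icc 1 N, ((d:ℝ))⁻¹ := by
  have e1 : ∑ x2 ∈ Finset.Ioc x1 N, ((x2:ℝ) - (x1:ℝ))⁻¹
      = ∑ d ∈ Finset.Icc 1 (N - x1), ((d:ℝ))⁻¹ := by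
    apply Finset.sum_nbij' (i := fun x2 => x2 - x1) (j := fun d => d + x1)
    · intro a ha; rw [Finset.mem_Ioc] at ha; rw [Finset.mem_Icc]; omega
    · intro a ha; rw [Finset.mem_Icc] at ha; rw [Finset.mem_Ioc]; omega
    · intro a ha; rw [Finset.mem_Ioc] at ha; omega
    · intro a ha; rw [Finset.mem_Icc] at ha; omega
    · intro a ha
      rw [Finset.mem_Ioc] at ha
      rw [Nat.cast_sub (by omega)]
  rw [e1]
  apply Finset.sum_le_sum_of_subset_of_nonneg
  · intro d hd; rw [Finset.mem_Icc] at *; omega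
  · intro i _ _; positivity

lemma sumL3 (N x1 : ℕ) (hx1 : x1 ≤ N) :
    ∑ x2 ∈ Finset.Ico 1 x1, ((x2:ℝ))⁻¹ ≤ ∑ d ∈ Finset.Icc 1 N, ((d:ℝ))⁻¹ := by
  apply Finset.sum_le_sum_of_subset_of_nonneg
  · intro d hd; rw [Finset.mem_Ico] at hd; rw [Finset.mem_Icc]; omega
  · intro i _ _; positivity

lemma hsum_le (N : ℕ) : ∑ d ∈ Finset.Icc 1 N, ((d:ℝ))⁻¹ ≤ 1 + Real.log N := by
  have h := harmonic_le_one_add_log N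
  rw [harmonic_eq_sum_Icc] at h
  push_cast at h
  exact h

lemma log_le_eps (N : ℕ) (hN : 1 ≤ N) (ε : ℝ) (hε : 0 < ε) :
    1 + Real.log N ≤ (1 + 2 / ε) * (N:ℝ) ^ (ε / 2) := by
  have hN0 : (0:ℝ) < N := by exact_mod_cast hN
  have hN1 : (1:ℝ) ≤ N := by exact_mod_cast hN
  have h1 : (1:ℝ) ≤ (N:ℝ) ^ (ε / 2) := Real.one_le_rpow hN1 (by positivity)
  have h2 : Real.log N = (2 / ε) * Real.log ((N:ℝ) ^ (ε / 2)) := by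
    rw [Real.log_rpow hN0]
    field_simp
  have h3 : Real.log ((N:ℝ) ^ (ε / 2)) ≤ (N:ℝ) ^ (ε / 2) - 1 :=
    Real.log_le_sub_one_of_pos (by positivity)
  have h4 : Real.log N ≤ (2 / ε) * (N:ℝ) ^ (ε / 2) := by
    rw [h2]
    have : (0:ℝ) ≤ 2 / ε := by positivity
    nlinarith
  nlinarith

theorem oscillating_pair_sum_bound (A : ℝ) (hA : 0 < A) (ε : ℝ) (hε : 0 < ε) :
    ∃ C > (0 : ℝ), ∀ n : ℝ, n ≠ 0 → ∀ N : ℕ, 2 ≤ N →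
      ((N : ℝ) ^ 2)⁻¹ * ∑ x₁ ∈ Finset.Icc 1 N, ∑ x₂ ∈ (Finset.Icc 1 N).erase x₁,
          ‖∫ α in Set.Icc A (A + 1), e (n * ((x₁ : ℝ) ^ α - (x₂ : ℝ) ^ α))‖ ≤
        C * (N : ℝ) ^ (-min 2 A + ε) / |n| := by
  refine ⟨3 * (1 + 2 / ε) ^ 2, by positivity, ?_⟩
  intro n hn N hN
  have hN1 : 1 ≤ N := le_trans one_le_two hN
  have hN0 : (0:ℝ) < N := by exact_mod_cast Nat.lt_of_lt_of_le Nat.zero_lt_two hN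
  set μ : ℝ := min 2 A with hμ
  set H : ℝ := ∑ d ∈ Finset.Icc 1 N, ((d:ℝ))⁻¹ with hH
  have hHnn : 0 ≤ H := Finset.sum_nonneg fun d _ => by positivity
  have hnpos : 0 < |n| := abs_pos.2 hn
  set K : ℝ := (N:ℝ) ^ (2 - μ) / |n| with hK
  have hK0 : 0 ≤ K := by positivity
  -- inner bound
  have inner : ∀ x1 ∈ Finset.Icc 1 N,
      (∑ x2 ∈ (Finset.Icc 1 N).erase x1,
        ‖∫ α in Set.Icc A (A + 1), e (n * ((x1:ℝ) ^ α - (x2:ℝ) ^ α))‖)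
      ≤ K * (3 * H) * ((x1:ℝ))⁻¹ := by
    intro x1 hx1
    rw [Finset.mem_Icc] at hx1
    have hx1R : (1:ℝ) ≤ (x1:ℝ) := by exact_mod_cast hx1.1
    have hx10 : (0:ℝ) < (x1:ℝ) := lt_of_lt_of_le one_pos hx1R
    have hsplit : (Finset.Icc 1 N).erase x1 = Finset.Ico 1 x1 ∪ Finset.Ioc x1 N := by
      ext a
      simp only [Finset.mem_erase, Finset.mem_Icc, Finset.mem_union, Finset.mem_Ico,
        Finset.mem_Ioc]
      omega
    have hdisj : Disjoint (Finset.Ico 1 x1) (Finset.Ioc x1 N) := by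
      rw [Finset.disjoint_left]
      intro a ha hb
      rw [Finset.mem_Ico] at ha; rw [Finset.mem_Ioc] at hb; omega
    rw [hsplit, Finset.sum_union hdisj]
    have p1 : (∑ x2 ∈ Finset.Ico 1 x1,
        ‖∫ α in Set.Icc A (A + 1), e (n * ((x1:ℝ) ^ α - (x2:ℝ) ^ α))‖)
        ≤ K * ((x1:ℝ))⁻¹ * (H + H) := by
      have step : ∀ x2 ∈ Finset.Ico 1 x1,
          ‖∫ α in Set.Icc A (A + 1), e (n * ((x1:ℝ) ^ α - (x2:ℝ) ^ α))‖
          ≤ K * ((x1:ℝ))⁻¹ * ((((x1:ℝ) - x2)⁻¹) + ((x2:ℝ))⁻¹) := by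
        intro x2 hx2
        rw [Finset.mem_Ico] at hx2
        have h := pair_nat A hA n hn N x1 x2 hx2.1 hx2.2 hx1.2
        refine h.trans (le_of_eq ?_)
        have hx2R : (1:ℝ) ≤ (x2:ℝ) := by exact_mod_cast hx2.1
        have hx2lt : (x2:ℝ) < (x1:ℝ) := by exact_mod_cast hx2.2
        have hd : (0:ℝ) < (x1:ℝ) - x2 := by linarith
        have hx20 : (0:ℝ) < (x2:ℝ) := by linarith
        rw [hK]
        field_simp
        ring
      calc (∑ x2 ∈ Finset.Ico 1 x1,
          ‖∫ α in Set.Icc A (A + 1), e (n * ((x1:ℝ) ^ α - (x2:ℝ) ^ α))‖)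
          ≤ ∑ x2 ∈ Finset.Ico 1 x1,
            (K * ((x1:ℝ))⁻¹ * ((((x1:ℝ) - x2)⁻¹) + ((x2:ℝ))⁻¹)) := Finset.sum_le_sum step
        _ = K * ((x1:ℝ))⁻¹ * ((∑ x2 ∈ Finset.Ico 1 x1, ((x1:ℝ) - x2)⁻¹)
            + ∑ x2 ∈ Finset.Ico 1 x1, ((x2:ℝ))⁻¹) := by
            rw [← Finset.mul_sum, Finset.sum_add_distrib]
        _ ≤ K * ((x1:ℝ))⁻¹ * (H + H) := by
            apply mul_le_mul_of_nonneg_left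
              (add_le_add (sumL1 N x1 hx1.2) (sumL3 N x1 hx1.2)) (by positivity)
    have p2 : (∑ x2 ∈ Finset.Ioc x1 N,
        ‖∫ α in Set.Icc A (A + 1), e (n * ((x1:ℝ) ^ α - (x2:ℝ) ^ α))‖)
        ≤ K * ((x1:ℝ))⁻¹ * H := by
      have step : ∀ x2 ∈ Finset.Ioc x1 N,
          ‖∫ α in Set.Icc A (A + 1), e (n * ((x1:ℝ) ^ α - (x2:ℝ) ^ α))‖
          ≤ K * ((x1:ℝ))⁻¹ * (((x2:ℝ) - x1)⁻¹) := by
        intro x2 hx2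
        rw [Finset.mem_Ioc] at hx2
        simp only [show ∀ α : ℝ, n * ((x1:ℝ) ^ α - (x2:ℝ) ^ α)
            = (-n) * ((x2:ℝ) ^ α - (x1:ℝ) ^ α) from fun α => by ring]
        have h := pair_nat A hA (-n) (neg_ne_zero.2 hn) N x2 x1 hx1.1 hx2.1 hx2.2
        rw [abs_neg] at h
        refine h.trans (le_of_eq ?_)
        have hx2R : (x1:ℝ) < (x2:ℝ) := by exact_mod_cast hx2.1
        have hd : (0:ℝ) < (x2:ℝ) - x1 := by linarith
        rw [hK]
        field_simp
        rfl
      calc (∑ x2 ∈ Finset.Ioc x1 N,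
          ‖∫ α in Set.Icc A (A + 1), e (n * ((x1:ℝ) ^ α - (x2:ℝ) ^ α))‖)
          ≤ ∑ x2 ∈ Finset.Ioc x1 N, (K * ((x1:ℝ))⁻¹ * (((x2:ℝ) - x1)⁻¹)) :=
            Finset.sum_le_sum step
        _ = K * ((x1:ℝ))⁻¹ * (∑ x2 ∈ Finset.Ioc x1 N, ((x2:ℝ) - x1)⁻¹) := by
            rw [← Finset.mul_sum]
        _ ≤ K * ((x1:ℝ))⁻¹ * H := by
            apply mul_le_mul_of_nonneg_left (sumL2 N x1) (by positivity)
    refine (add_le_add p1 p2).trans (le_of_eq ?_)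
    ring
  have hsum : (∑ x₁ ∈ Finset.Icc 1 N, ∑ x₂ ∈ (Finset.Icc 1 N).erase x₁,
      ‖∫ α in Set.Icc A (A + 1), e (n * ((x₁:ℝ) ^ α - (x₂:ℝ) ^ α))‖)
      ≤ K * (3 * H) * H := by
    calc (∑ x₁ ∈ Finset.Icc 1 N, ∑ x₂ ∈ (Finset.Icc 1 N).erase x₁,
        ‖∫ α in Set.Icc A (A + 1), e (n * ((x₁:ℝ) ^ α - (x₂:ℝ) ^ α))‖)
        ≤ ∑ x₁ ∈ Finset.Icc 1 N, K * (3 * H) * ((x₁:ℝ))⁻¹ := Finset.sum_le_sum inner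
      _ = K * (3 * H) * H := by rw [← Finset.mul_sum]
  -- conclude
  have hHle : H ≤ (1 + 2 / ε) * (N:ℝ) ^ (ε / 2) :=
    (hsum_le N).trans (log_le_eps N hN1 ε hε)
  have hH2 : H * H ≤ (1 + 2 / ε) ^ 2 * (N:ℝ) ^ ε := by
    have h1 : H * H ≤ ((1 + 2 / ε) * (N:ℝ) ^ (ε / 2)) * ((1 + 2 / ε) * (N:ℝ) ^ (ε / 2)) :=
      mul_le_mul hHle hHle hHnn (by positivity)
    calc H * H ≤ ((1 + 2 / ε) * (N:ℝ) ^ (ε / 2)) * ((1 + 2 / ε) * (N:ℝ) ^ (ε / 2)) := h1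
      _ = (1 + 2 / ε) ^ 2 * ((N:ℝ) ^ (ε / 2) * (N:ℝ) ^ (ε / 2)) := by ring
      _ = (1 + 2 / ε) ^ 2 * (N:ℝ) ^ ε := by
          rw [← Real.rpow_add hN0]
          norm_num
  have hinv : (0:ℝ) ≤ ((N:ℝ) ^ 2)⁻¹ := by positivity
  calc ((N:ℝ) ^ 2)⁻¹ * ∑ x₁ ∈ Finset.Icc 1 N, ∑ x₂ ∈ (Finset.Icc 1 N).erase x₁,
      ‖∫ α in Set.Icc A (A + 1), e (n * ((x₁:ℝ) ^ α - (x₂:ℝ) ^ α))‖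
      ≤ ((N:ℝ) ^ 2)⁻¹ * (K * (3 * H) * H) := mul_le_mul_of_nonneg_left hsum hinv
    _ = ((N:ℝ) ^ 2)⁻¹ * (N:ℝ) ^ (2 - μ) * 3 * (H * H) / |n| := by
        rw [hK]; ring
    _ ≤ ((N:ℝ) ^ 2)⁻¹ * (N:ℝ) ^ (2 - μ) * 3 * ((1 + 2 / ε) ^ 2 * (N:ℝ) ^ ε) / |n| := by
        gcongr
    _ = 3 * (1 + 2 / ε) ^ 2 * (N:ℝ) ^ (-μ + ε) / |n| := by
        have hpow : ((N:ℝ) ^ 2)⁻¹ * (N:ℝ) ^ (2 - μ) * (N:ℝ) ^ ε = (N:ℝ) ^ (-μ + ε) := by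
          rw [show ((N:ℝ) ^ 2)⁻¹ = (N:ℝ) ^ (-(2:ℝ)) from by
            rw [Real.rpow_neg hN0.le, Real.rpow_two]]
          rw [← Real.rpow_add hN0, ← Real.rpow_add hN0]
          congr 1
          ring
        linear_combination (3 * (1 + 2 / ε) ^ 2 / |n|) * hpow
end
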